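/- arXiv:1008.2701 — 6 statements merged into one kernel-verified Lean document; each statement's English description precedes it below -/
import Mathlib

section
/- Let f : (a,b) → ℝ be n-convex (n ≥ 1) with f_R^{(n)}(a+) finite, and let μ be the nonnegative Borel measure on (a,b) defined by μ([x,y]) = f_R^{(n)}(y) − f_L^{(n)}(x) for a < x ≤ y < b, extended to [a,c] for all c < b. Then f(x) = Σ_{k=0}^{n} f_R^{(k)}(a+) (x−a)^k / k! + (1/n!) ∫_a^b (x−t)₊^n dμ(t) for all x ∈ (a,b). -/
open Set Filter MeasureTheory
open ENNReal intervalIntegral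


noncomputable def ncrB (μ : Measure ℝ) (a : ℝ) : ℕ → ℝ → ℝ≥0∞
  | 0 => fun s => μ (Set.Ioc a s)
  | (m+1) => fun x => ∫⁻ s in Set.Ioo a x, ncrB μ a m s

lemma ncrB_mono (μ : Measure ℝ) (a : ℝ) : ∀ m, Monotone (ncrB μ a m) := by
  intro m
  induction m with
  | zero => exact fun x y hxy => measure_mono (Set.Ioc_subset_Ioc_right hxy)
  | succ m ih =>
      intro x y hxy
      exact lintegral_mono_set (Set.Ioo_subset_Ioo_right hxy)

lemma ncrB_measurable (μ : Measure ℝ) (a : ℝ) (m : ℕ) : Measurable (ncrB μ a m) :=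
  (ncrB_mono μ a m).measurable

lemma ncrB_le (μ : Measure ℝ) (a : ℝ) (m : ℕ) (x : ℝ) :
    ncrB μ a m x ≤ μ (Set.Ioc a x) * (ENNReal.ofReal (x - a)) ^ m := by
  induction m generalizing x with
  | zero => simp [ncrB]
  | succ m ih =>
      calc ∫⁻ s in Set.Ioo a x, ncrB μ a m s
          ≤ ∫⁻ _s in Set.Ioo a x, μ (Set.Ioc a x) * (ENNReal.ofReal (x - a)) ^ m := by
            refine setLIntegral_mono' measurableSet_Ioo fun s hs => ?_
            exact le_trans (ih s) (mul_le_mul' (measure_mono (Set.Ioc_subset_Ioc_right hs.2.le))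
              (pow_le_pow_left' (ENNReal.ofReal_le_ofReal (by linarith [hs.2])) m))
        _ = μ (Set.Ioc a x) * (ENNReal.ofReal (x - a)) ^ m * ENNReal.ofReal (x - a) := by
            rw [setLIntegral_const, Real.volume_Ioo]
        _ = μ (Set.Ioc a x) * (ENNReal.ofReal (x - a)) ^ (m + 1) := by ring

noncomputable def ncrK (m : ℕ) (s t : ℝ) : ℝ := if t ≤ s then (s - t) ^ (m - 1) else 0

lemma ncrK_meas (m : ℕ) : Measurable (fun p : ℝ × ℝ => ncrK m p.2 p.1) := by
  unfold ncrK
  exact Measurable.ite (measurableSet_le measurable_fst measurable_snd)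
    ((measurable_snd.sub measurable_fst).pow_const _) measurable_const

lemma ncrK_meas_right (m : ℕ) (t : ℝ) : Measurable (fun s => ncrK m s t) := by
  unfold ncrK
  exact Measurable.ite (measurableSet_le measurable_const measurable_id)
    ((measurable_id.sub measurable_const).pow_const _) measurable_const

lemma ncrK_nonneg (m : ℕ) (s t : ℝ) : 0 ≤ ncrK m s t := by
  unfold ncrK
  by_cases h : t ≤ s
  · simp only [h, if_true]; exact pow_nonneg (by linarith) _
  · simp [h]

-- pointwise evaluation of the inner volume integral
lemma ncrK_integral (m : ℕ) (hm : 1 ≤ m) {a x t : ℝ} (ht : t ∈ Set.Ioc a x) :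
    ∫ s in Set.Ioo a x, ncrK m s t = (x - t) ^ m / m := by
  have h1 : ∀ s : ℝ, ncrK m s t = (Set.Ici t).indicator (fun s => (s - t) ^ (m - 1)) s := by
    intro s
    by_cases h : t ≤ s <;> simp [ncrK, Set.indicator, Set.mem_Ici, h]
  simp_rw [h1]
  rw [MeasureTheory.setIntegral_indicator measurableSet_Ici]
  have h2 : Set.Ioo a x ∩ Set.Ici t = Set.Ico t x := by
    ext s
    simp only [Set.mem_inter_iff, Set.mem_Ioo, Set.mem_Ici, Set.mem_Ico]
    constructor
    · rintro ⟨⟨_, h2⟩, h3⟩; exact ⟨h3, h2⟩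
    · rintro ⟨h2, h3⟩; exact ⟨⟨lt_of_lt_of_le ht.1 h2, h3⟩, h2⟩
  rw [h2, MeasureTheory.integral_Ico_eq_integral_Ioo, ← MeasureTheory.integral_Ioc_eq_integral_Ioo,
    ← intervalIntegral.integral_of_le ht.2]
  rw [show (fun s => (s - t) ^ (m - 1)) = fun s => (fun u => u ^ (m - 1)) (s - t) from rfl]
  rw [intervalIntegral.integral_comp_sub_right (fun u => u ^ (m - 1)) t, sub_self]
  rw [integral_pow]
  have : m - 1 + 1 = m := Nat.succ_pred_eq_of_pos hm
  rw [this]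
  have h4 : ((m - 1 : ℕ) : ℝ) + 1 = (m : ℝ) := by exact_mod_cast congrArg (Nat.cast (R := ℝ)) this
  rw [h4, zero_pow (by omega : m ≠ 0), sub_zero]

lemma ncr_swap (μ : Measure ℝ) {a x : ℝ} (hax : a < x) (m : ℕ) (hm : 1 ≤ m)
    (hfin : μ (Set.Ioc a x) ≠ ⊤) :
    ∫⁻ t in Set.Ioc a x, ENNReal.ofReal ((x - t) ^ m) ∂μ
      = m * ∫⁻ s in Set.Ioo a x, (∫⁻ t in Set.Ioc a x, ENNReal.ofReal (ncrK m s t) ∂μ) := by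
  have hpt : ∀ t ∈ Set.Ioc a x,
      ENNReal.ofReal ((x - t) ^ m) = m * ∫⁻ s in Set.Ioo a x, ENNReal.ofReal (ncrK m s t) := by
    intro t ht
    have hInt : IntegrableOn (fun s => ncrK m s t) (Set.Ioo a x) volume := by
      apply Integrable.mono' (g := fun _ => (x - a) ^ (m - 1))
      · exact (MeasureTheory.integrableOn_const
          (by rw [Real.volume_Ioo]; exact ENNReal.ofReal_ne_top))
      · exact (ncrK_meas_right m t).aestronglyMeasurable
      · refine (MeasureTheory.ae_restrict_iff' measurableSet_Ioo).2 (Filter.Eventually.of_forall ?_)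
        intro s hs
        rw [Real.norm_eq_abs, abs_of_nonneg (ncrK_nonneg m s t)]
        unfold ncrK
        by_cases h : t ≤ s
        · simp only [h, if_true]
          exact pow_le_pow_left₀ (by linarith) (by linarith [ht.1, hs.2]) _
        · simp only [h, if_false]
          exact pow_nonneg (by linarith [hax]) _
    have hnn : 0 ≤ᵐ[volume.restrict (Set.Ioo a x)] fun s => ncrK m s t :=
      Filter.Eventually.of_forall fun s => ncrK_nonneg m s t
    rw [← MeasureTheory.ofReal_integral_eq_lintegral_ofReal hInt hnn, ncrK_integral m hm ht,
      ← ENNReal.ofReal_natCast m, ← ENNReal.ofReal_mul (by positivity)]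
    congr 1
    field_simp
  calc ∫⁻ t in Set.Ioc a x, ENNReal.ofReal ((x - t) ^ m) ∂μ
      = ∫⁻ t in Set.Ioc a x, ↑m * (∫⁻ s in Set.Ioo a x, ENNReal.ofReal (ncrK m s t)) ∂μ :=
        setLIntegral_congr_fun_ae measurableSet_Ioc (Filter.Eventually.of_forall hpt)
    _ = m * ∫⁻ t in Set.Ioc a x, (∫⁻ s in Set.Ioo a x, ENNReal.ofReal (ncrK m s t)) ∂μ := by
        rw [MeasureTheory.lintegral_const_mul' _ _ (by simp)]
    _ = m * ∫⁻ s in Set.Ioo a x, (∫⁻ t in Set.Ioc a x, ENNReal.ofReal (ncrK m s t) ∂μ) := by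
        congr 1
        haveI : IsFiniteMeasure (μ.restrict (Set.Ioc a x)) := by
          constructor
          rw [Measure.restrict_apply_univ]
          exact hfin.lt_top
        exact MeasureTheory.lintegral_lintegral_swap
          (μ := μ.restrict (Set.Ioc a x)) (ν := volume.restrict (Set.Ioo a x))
          (f := fun t s => ENNReal.ofReal (ncrK m s t))
          (((ncrK_meas m).ennreal_ofReal).aemeasurable)
lemma ncr_inner_one (μ : Measure ℝ) {a x s : ℝ} (hs : s ∈ Set.Ioo a x) :
    ∫⁻ t in Set.Ioc a x, ENNReal.ofReal (ncrK 1 s t) ∂μ = μ (Set.Ioc a s) := by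
  have h1 : ∀ t : ℝ, ENNReal.ofReal (ncrK 1 s t) = (Set.Iic s).indicator (fun _ => 1) t := by
    intro t
    by_cases h : t ≤ s <;> simp [ncrK, Set.indicator, Set.mem_Iic, h]
  simp_rw [h1]
  rw [MeasureTheory.lintegral_indicator measurableSet_Iic, Measure.restrict_restrict
    measurableSet_Iic, MeasureTheory.setLIntegral_one]
  congr 1
  ext t
  simp only [Set.mem_inter_iff, Set.mem_Iic, Set.mem_Ioc]
  constructor
  · rintro ⟨h2, h3, _⟩; exact ⟨h3, h2⟩
  · rintro ⟨h2, h3⟩; exact ⟨h3, h2, le_trans h3 hs.2.le⟩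

lemma ncr_inner_succ (μ : Measure ℝ) (m : ℕ) {a x s : ℝ} (hs : s ∈ Set.Ioo a x) :
    ∫⁻ t in Set.Ioc a x, ENNReal.ofReal (ncrK (m + 1) s t) ∂μ
      = ∫⁻ t in Set.Ioc a s, ENNReal.ofReal ((s - t) ^ m) ∂μ := by
  rw [← Set.Ioc_union_Ioc_eq_Ioc hs.1.le hs.2.le,
    MeasureTheory.lintegral_union measurableSet_Ioc (Set.Ioc_disjoint_Ioc_of_le le_rfl)]
  have h2 : ∫⁻ t in Set.Ioc s x, ENNReal.ofReal (ncrK (m + 1) s t) ∂μ = 0 := by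
    rw [MeasureTheory.setLIntegral_congr_fun_ae (f := fun t => ENNReal.ofReal (ncrK (m + 1) s t))
      (g := fun _ => 0) measurableSet_Ioc]
    · exact MeasureTheory.lintegral_zero
    · refine Filter.Eventually.of_forall fun t ht => ?_
      have : ¬ t ≤ s := not_le.2 ht.1
      simp [ncrK, this]
  rw [h2, add_zero]
  apply MeasureTheory.setLIntegral_congr_fun_ae measurableSet_Ioc
  refine Filter.Eventually.of_forall fun t ht => ?_
  simp [ncrK, ht.2]

lemma ncr_Gl (μ : Measure ℝ) {a b : ℝ} (hfin : ∀ x ∈ Set.Ioo a b, μ (Set.Ioc a x) ≠ ⊤) :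
    ∀ m, 1 ≤ m → ∀ x ∈ Set.Ioo a b,
      ∫⁻ t in Set.Ioc a x, ENNReal.ofReal ((x - t) ^ m) ∂μ
        = (Nat.factorial m : ℝ≥0∞) * ncrB μ a m x := by
  intro m hm
  induction m, hm using Nat.le_induction with
  | base =>
      intro x hx
      rw [ncr_swap μ hx.1 1 le_rfl (hfin x hx)]
      rw [MeasureTheory.setLIntegral_congr_fun_ae (g := fun s => ncrB μ a 0 s) measurableSet_Ioo
        (Filter.Eventually.of_forall fun s hs => ncr_inner_one μ hs)]
      simp [ncrB, Nat.factorial]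
  | succ m hm ih =>
      intro x hx
      rw [ncr_swap μ hx.1 (m + 1) (by omega) (hfin x hx)]
      rw [MeasureTheory.setLIntegral_congr_fun_ae
        (g := fun s => (Nat.factorial m : ℝ≥0∞) * ncrB μ a m s) measurableSet_Ioo
        (Filter.Eventually.of_forall fun s hs => by
          rw [ncr_inner_succ μ m hs]
          exact ih s ⟨hs.1, hs.2.trans hx.2⟩)]
      rw [MeasureTheory.lintegral_const_mul' _ _ (ENNReal.natCast_ne_top _)]
      have hB : ncrB μ a (m + 1) x = ∫⁻ s in Set.Ioo a x, ncrB μ a m s := by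
        simp [ncrB]
      rw [hB, Nat.factorial_succ, Nat.cast_mul]
      ring

lemma ncr_primitive_limit {H φ : ℝ → ℝ} {a x L : ℝ} (hax : a < x)
    (hInt : IntervalIntegrable H volume a x)
    (heq : ∀ y ∈ Set.Ioo a x, φ x - φ y = ∫ s in y..x, H s)
    (hφ : Tendsto φ (nhdsWithin a (Set.Ioi a)) (nhds L)) :
    φ x = L + ∫ s in Set.Ioo a x, H s := by
  have hIcc : IntegrableOn H (Set.Icc a x) volume := by
    rwa [intervalIntegrable_iff_integrableOn_Icc_of_le hax.le] at hInt
  have hcont : ContinuousOn (fun y => ∫ s in Set.Icc a y, H s) (Set.Icc a x) :=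
    intervalIntegral.continuousOn_primitive_Icc hIcc
  have h0 : Tendsto (fun y => ∫ s in a..y, H s) (nhdsWithin a (Set.Ioi a)) (nhds 0) := by
    have h1 : Tendsto (fun y => ∫ s in Set.Icc a y, H s) (nhdsWithin a (Set.Icc a x)) (nhds 0) := by
      have := (hcont a (Set.left_mem_Icc.2 hax.le))
      simpa [ContinuousWithinAt, Set.Icc_self] using this
    have h2 : Tendsto (fun y => ∫ s in Set.Icc a y, H s) (nhdsWithin a (Set.Ioo a x)) (nhds 0) :=
      h1.mono_left (nhdsWithin_mono a Set.Ioo_subset_Icc_self)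
    rw [nhdsWithin_Ioo_eq_nhdsGT hax] at h2
    apply h2.congr'
    filter_upwards [self_mem_nhdsWithin] with y (hy : a < y)
    rw [intervalIntegral.integral_of_le hy.le, MeasureTheory.integral_Icc_eq_integral_Ioc]
  have key : Tendsto (fun y => φ x - (∫ s in a..x, H s) + ∫ s in a..y, H s)
      (nhdsWithin a (Set.Ioi a)) (nhds L) := by
    apply Tendsto.congr' _ hφ
    filter_upwards [Ioo_mem_nhdsGT_of_mem ⟨le_refl a, hax⟩] with y hy
    have hay : IntervalIntegrable H volume a y := by
      apply hInt.mono_set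
      rw [Set.uIcc_of_le hy.1.le, Set.uIcc_of_le hax.le]
      exact Set.Icc_subset_Icc le_rfl hy.2.le
    have hyx : IntervalIntegrable H volume y x := by
      apply hInt.mono_set
      rw [Set.uIcc_of_le hy.2.le, Set.uIcc_of_le hax.le]
      exact Set.Icc_subset_Icc hy.1.le le_rfl
    have hsplit : (∫ s in a..y, H s) + ∫ s in y..x, H s = ∫ s in a..x, H s :=
      intervalIntegral.integral_add_adjacent_intervals hay hyx
    have h3 := heq y hy
    linarith
  have kc : Tendsto (fun _ : ℝ => φ x - ∫ s in a..x, H s) (nhdsWithin a (Set.Ioi a))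
      (nhds (φ x - ∫ s in a..x, H s)) := tendsto_const_nhds
  have key2 := kc.add h0
  rw [add_zero] at key2
  have huniq := tendsto_nhds_unique key key2
  rw [intervalIntegral.integral_of_le hax.le, MeasureTheory.integral_Ioc_eq_integral_Ioo] at huniq
  linarith


/-- Integral representation of an `n`-convex function `f` on `(a,b)` whose right `n`-th
derivative has a finite limit at `a+`: here `F` is the chain of ordinary derivatives of
`f` up to order `n-1`, `fnR` and `fnL` are the right and left `n`-th derivatives, `μ` is
the nonnegative Borel measure with `μ([x,y]) = fnR y - fnL x`, extended to `(a,y]`, and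
`c k` is the right limit of the `k`-th derivative at `a`. Then
`f(x) = ∑_{k=0}^n c k (x-a)^k/k! + (1/n!) ∫_a^b (x-t)₊ⁿ dμ(t)` on `(a,b)`. -/
theorem nconvex_integral_representation (n : ℕ) (hn : 1 ≤ n) (a b : ℝ) (hab : a < b)
    (f : ℝ → ℝ) (F : ℕ → ℝ → ℝ) (fnL fnR : ℝ → ℝ) (c : ℕ → ℝ)
    (μ : Measure ℝ)
    (hF0 : F 0 = f)
    (hchain : ∀ k, k + 1 ≤ n - 1 → ∀ x ∈ Set.Ioo a b, HasDerivAt (F k) (F (k + 1) x) x)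
    (hL : ∀ x ∈ Set.Ioo a b, HasDerivWithinAt (F (n - 1)) (fnL x) (Set.Iic x) x)
    (hR : ∀ x ∈ Set.Ioo a b, HasDerivWithinAt (F (n - 1)) (fnR x) (Set.Ici x) x)
    (hmono : MonotoneOn fnR (Set.Ioo a b))
    (hμ : ∀ x y, a < x → x ≤ y → y < b →
      μ (Set.Icc x y) = ENNReal.ofReal (fnR y - fnL x))
    (hlim : ∀ k < n, Filter.Tendsto (F k) (nhdsWithin a (Set.Ioi a)) (nhds (c k)))
    (hlimn : Filter.Tendsto fnR (nhdsWithin a (Set.Ioi a)) (nhds (c n)))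
    (hext : ∀ y ∈ Set.Ioo a b, μ (Set.Ioc a y) = ENNReal.ofReal (fnR y - c n)) :
    ∀ x ∈ Set.Ioo a b,
      f x = ∑ k ∈ Finset.range (n + 1), c k * (x - a) ^ k / (Nat.factorial k) +
        (1 / (Nat.factorial n : ℝ)) * ∫ t in Set.Ioo a b, max (x - t) 0 ^ n ∂μ := by
  have hfin : ∀ y ∈ Set.Ioo a b, μ (Set.Ioc a y) ≠ ⊤ := fun y hy => by
    rw [hext y hy]; exact ENNReal.ofReal_ne_top
  have hcn : ∀ s ∈ Set.Ioo a b, c n ≤ fnR s := by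
    intro s hs
    refine le_of_tendsto hlimn ?_
    filter_upwards [Ioo_mem_nhdsGT_of_mem ⟨le_refl a, hs.1⟩] with y hy
    exact hmono ⟨hy.1, hy.2.trans hs.2⟩ hs hy.2.le
  -- clamped version of fnR, monotone on all of ℝ
  have hclamp : ∀ u ∈ Set.Ioo a b, ∃ g : ℝ → ℝ, Monotone g ∧ ∀ t ∈ Set.Ioc a u, g t = fnR t := by
    intro u hu
    refine ⟨fun t => if a < t then fnR (min t u) else c n, ?_, ?_⟩
    · intro t t' htt'
      by_cases h : a < t
      · have h' : a < t' := lt_of_lt_of_le h htt'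
        simp only [h, h', if_true]
        exact hmono ⟨lt_min h hu.1, lt_of_le_of_lt (min_le_right _ _) hu.2⟩
          ⟨lt_min h' hu.1, lt_of_le_of_lt (min_le_right _ _) hu.2⟩
          (min_le_min htt' le_rfl)
      · by_cases h' : a < t'
        · simp only [h, h', if_true, if_false]
          exact hcn _ ⟨lt_min h' hu.1, lt_of_le_of_lt (min_le_right _ _) hu.2⟩
        · simp [h, h']
    · intro t ht
      show (if a < t then fnR (min t u) else c n) = fnR t
      rw [if_pos ht.1, min_eq_left ht.2]
  have hFcont : ∀ s ∈ Set.Ioo a b, ContinuousAt (F (n - 1)) s := fun s hs =>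
    continuousAt_iff_continuous_left_right.2
      ⟨(hL s hs).continuousWithinAt, (hR s hs).continuousWithinAt⟩
  have key1 : ∀ y x : ℝ, a < y → y ≤ x → x < b →
      ∫ s in y..x, fnR s = F (n - 1) x - F (n - 1) y := by
    intro y x hay hyx hxb
    apply intervalIntegral.integral_eq_sub_of_hasDeriv_right_of_le hyx
    · intro s hs
      exact (hFcont s ⟨lt_of_lt_of_le hay hs.1, lt_of_le_of_lt hs.2 hxb⟩).continuousWithinAt
    · intro s hs
      exact (hR s ⟨hay.trans hs.1, hs.2.trans hxb⟩).mono Set.Ioi_subset_Ici_self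
    · apply MonotoneOn.intervalIntegrable
      intro u hu v hv huv
      rw [Set.uIcc_of_le hyx] at hu hv
      exact hmono ⟨lt_of_lt_of_le hay hu.1, lt_of_le_of_lt hu.2 hxb⟩
        ⟨lt_of_lt_of_le hay hv.1, lt_of_le_of_lt hv.2 hxb⟩ huv
  have hBfin : ∀ m : ℕ, ∀ x ∈ Set.Ioo a b, ncrB μ a m x ≠ ⊤ := by
    intro m x hx
    refine ne_top_of_le_ne_top ?_ (ncrB_le μ a m x)
    exact ENNReal.mul_ne_top (hfin x hx) (ENNReal.pow_ne_top ENNReal.ofReal_ne_top)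
  -- the main induction
  have KEY : ∀ m, 1 ≤ m → m ≤ n → ∀ x ∈ Set.Ioo a b,
      F (n - m) x = (∑ k ∈ Finset.range (m + 1),
          c (n - m + k) * (x - a) ^ k / (Nat.factorial k)) + (ncrB μ a m x).toReal := by
    intro m hm
    induction m, hm using Nat.le_induction with
    | base =>
        intro _ x hx
        obtain ⟨g, hgmono, hgeq⟩ := hclamp x hx
        have hInt : IntervalIntegrable g volume a x :=
          (hgmono.monotoneOn _).intervalIntegrable
        have heq : ∀ y ∈ Set.Ioo a x, F (n - 1) x - F (n - 1) y = ∫ s in y..x, g s := by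
          intro y hy
          rw [← key1 y x hy.1 hy.2.le hx.2]
          apply intervalIntegral.integral_congr
          intro t ht
          rw [Set.uIcc_of_le hy.2.le] at ht
          exact (hgeq t ⟨lt_of_lt_of_le hy.1 ht.1, ht.2⟩).symm
        have hrep := ncr_primitive_limit hx.1 hInt heq (hlim (n - 1) (by omega))
        have hIntOn : IntegrableOn g (Set.Ioo a x) volume :=
          ((intervalIntegrable_iff_integrableOn_Ioc_of_le hx.1.le).1 hInt).mono_set
            Set.Ioo_subset_Ioc_self
        have hgfnR : Set.EqOn g fnR (Set.Ioo a x) := fun t ht => hgeq t ⟨ht.1, ht.2.le⟩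
        have hIntOn' : IntegrableOn fnR (Set.Ioo a x) volume :=
          hIntOn.congr_fun hgfnR measurableSet_Ioo
        have hvol : volume (Set.Ioo a x) < ⊤ := by
          rw [Real.volume_Ioo]; exact ENNReal.ofReal_lt_top
        have hconst : IntegrableOn (fun _ : ℝ => c n) (Set.Ioo a x) volume :=
          integrableOn_const hvol.ne
        have e1 : ∫ s in Set.Ioo a x, g s = ∫ s in Set.Ioo a x, fnR s :=
          MeasureTheory.setIntegral_congr_fun measurableSet_Ioo hgfnR
        have hsub : IntegrableOn (fun s => fnR s - c n) (Set.Ioo a x) volume :=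
          hIntOn'.sub hconst
        have e2 : ∫ s in Set.Ioo a x, fnR s
            = (∫ s in Set.Ioo a x, (fnR s - c n)) + c n * (x - a) := by
          have h5 : ∫ s in Set.Ioo a x, fnR s
              = ∫ s in Set.Ioo a x, ((fnR s - c n) + c n) := by
            congr 1; ext s; ring
          rw [h5, MeasureTheory.integral_add hsub hconst, MeasureTheory.setIntegral_const,
            Real.volume_real_Ioo_of_le hx.1.le,
            smul_eq_mul]
          ring
        have e3 : ∫ s in Set.Ioo a x, (fnR s - c n) = (ncrB μ a 1 x).toReal := by
          rw [MeasureTheory.integral_eq_lintegral_of_nonneg_ae]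
          · congr 1
            have h6 : ∫⁻ s in Set.Ioo a x, ENNReal.ofReal (fnR s - c n)
                = ∫⁻ s in Set.Ioo a x, ncrB μ a 0 s := by
              apply MeasureTheory.setLIntegral_congr_fun_ae measurableSet_Ioo
              refine Filter.Eventually.of_forall fun s hs => ?_
              show ENNReal.ofReal (fnR s - c n) = μ (Set.Ioc a s)
              rw [hext s ⟨hs.1, hs.2.trans hx.2⟩]
            rw [h6]; simp [ncrB]
          · refine (MeasureTheory.ae_restrict_iff' measurableSet_Ioo).2
              (Filter.Eventually.of_forall fun s hs => ?_)
            have := hcn s ⟨hs.1, hs.2.trans hx.2⟩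
            simp only [Pi.zero_apply]
            linarith
          · exact ((hgmono.measurable.sub measurable_const).aestronglyMeasurable).congr
              ((MeasureTheory.ae_restrict_iff' measurableSet_Ioo).2
                (Filter.Eventually.of_forall fun s hs => by
                  show g s - c n = fnR s - c n
                  rw [hgfnR hs]))
        rw [hrep, e1, e2, e3]
        have hidx : n - 1 + 1 = n := by omega
        rw [Finset.sum_range_succ, Finset.sum_range_one, hidx]
        simp only [pow_zero, pow_one, Nat.factorial_zero, Nat.factorial_one, Nat.cast_one]
        ring_nf
    | succ m hm ih =>
        intro hmn x hx
        have hmn' : m ≤ n := by omega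
        set P : ℝ → ℝ :=
          fun s => ∑ k ∈ Finset.range (m + 1), c (n - m + k) * (s - a) ^ k / (Nat.factorial k)
          with hP
        set H : ℝ → ℝ := fun s => P s + (ncrB μ a m s).toReal with hH
        have hHeq : ∀ s ∈ Set.Ioo a b, F (n - m) s = H s := fun s hs => ih hmn' s hs
        have hPcont : Continuous P := by
          apply continuous_finset_sum
          intro k _
          fun_prop
        have hBsm : AEStronglyMeasurable (fun s => (ncrB μ a m s).toReal)
            (volume.restrict (Set.Ioc a x)) :=
          ((ncrB_measurable μ a m).ennreal_toReal).aestronglyMeasurable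
        have hBInt : IntegrableOn (fun s => (ncrB μ a m s).toReal) (Set.Ioc a x) volume := by
          apply Integrable.mono' (g := fun _ => (ncrB μ a m x).toReal)
          · exact integrableOn_const
              (by rw [Real.volume_Ioc]; exact ENNReal.ofReal_ne_top)
          · exact hBsm
          · refine (MeasureTheory.ae_restrict_iff' measurableSet_Ioc).2
              (Filter.Eventually.of_forall fun s hs => ?_)
            rw [Real.norm_eq_abs, abs_of_nonneg ENNReal.toReal_nonneg]
            exact ENNReal.toReal_mono (hBfin m x hx) (ncrB_mono μ a m hs.2)
        have hHIntOn : IntegrableOn H (Set.Ioc a x) volume :=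
          (hPcont.integrableOn_Ioc).add hBInt
        have hHInt : IntervalIntegrable H volume a x :=
          (intervalIntegrable_iff_integrableOn_Ioc_of_le hx.1.le).2 hHIntOn
        have heq : ∀ y ∈ Set.Ioo a x,
            F (n - (m + 1)) x - F (n - (m + 1)) y = ∫ s in y..x, H s := by
          intro y hy
          have hiv : IntervalIntegrable (F (n - m)) volume y x := by
            apply (intervalIntegrable_iff_integrableOn_Ioc_of_le hy.2.le).2
            exact (hHIntOn.mono_set (Set.Ioc_subset_Ioc hy.1.le le_rfl)).congr_fun
              (fun t ht => (hHeq t ⟨hy.1.trans ht.1, lt_of_le_of_lt ht.2 hx.2⟩).symm)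
              measurableSet_Ioc
          have hderiv : ∀ t ∈ Set.uIcc y x, HasDerivAt (F (n - (m + 1))) (F (n - m) t) t := by
            intro t ht
            rw [Set.uIcc_of_le hy.2.le] at ht
            have hd := hchain (n - (m + 1)) (by omega) t
              ⟨hy.1.trans_le ht.1, lt_of_le_of_lt ht.2 hx.2⟩
            have hidx : n - (m + 1) + 1 = n - m := by omega
            rwa [hidx] at hd
          rw [← intervalIntegral.integral_eq_sub_of_hasDerivAt hderiv hiv]
          apply intervalIntegral.integral_congr
          intro t ht
          rw [Set.uIcc_of_le hy.2.le] at ht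
          exact hHeq t ⟨hy.1.trans_le ht.1, lt_of_le_of_lt ht.2 hx.2⟩
        have hrep := ncr_primitive_limit hx.1 hHInt heq (hlim (n - (m + 1)) (by omega))
        have hPIntOo : IntegrableOn P (Set.Ioo a x) volume :=
          (hPcont.integrableOn_Ioc).mono_set Set.Ioo_subset_Ioc_self
        have hBIntOo : IntegrableOn (fun s => (ncrB μ a m s).toReal) (Set.Ioo a x) volume :=
          hBInt.mono_set Set.Ioo_subset_Ioc_self
        have hsplit2 : ∫ s in Set.Ioo a x, H s
            = (∫ s in Set.Ioo a x, P s) + ∫ s in Set.Ioo a x, (ncrB μ a m s).toReal :=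
          MeasureTheory.integral_add hPIntOo hBIntOo
        have hBval : ∫ s in Set.Ioo a x, (ncrB μ a m s).toReal = (ncrB μ a (m + 1) x).toReal := by
          rw [MeasureTheory.integral_toReal ((ncrB_measurable μ a m).aemeasurable)
            ((MeasureTheory.ae_restrict_iff' measurableSet_Ioo).2
              (Filter.Eventually.of_forall fun s hs =>
                lt_of_le_of_lt (ncrB_mono μ a m hs.2.le) (lt_top_iff_ne_top.2 (hBfin m x hx))))]
          congr 1
        have hPval : ∫ s in Set.Ioo a x, P s
            = ∑ k ∈ Finset.range (m + 1),
                c (n - m + k) * (x - a) ^ (k + 1) / (Nat.factorial (k + 1)) := by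
          rw [hP]
          rw [MeasureTheory.integral_finset_sum _ (fun k _ =>
            ((Continuous.integrableOn_Ioc (by fun_prop)).mono_set Set.Ioo_subset_Ioc_self))]
          apply Finset.sum_congr rfl
          intro k _
          have hpow : ∫ s in Set.Ioo a x, (s - a) ^ k = (x - a) ^ (k + 1) / (k + 1) := by
            rw [← MeasureTheory.integral_Ioc_eq_integral_Ioo,
              ← intervalIntegral.integral_of_le hx.1.le]
            rw [show (fun s => (s - a) ^ k) = fun s => (fun u => u ^ k) (s - a) from rfl]
            rw [intervalIntegral.integral_comp_sub_right (fun u => u ^ k) a, sub_self,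
              integral_pow, zero_pow (by omega : k + 1 ≠ 0), sub_zero]
          have hre : (fun s => c (n - m + k) * (s - a) ^ k / (Nat.factorial k : ℝ))
              = fun s => (c (n - m + k) / (Nat.factorial k : ℝ)) * (s - a) ^ k := by
            ext s; ring
          rw [hre, MeasureTheory.integral_const_mul, hpow, Nat.factorial_succ]
          push_cast
          rw [div_mul_div_comm]
          ring_nf
        rw [hrep, hsplit2, hPval, hBval]
        conv_rhs => rw [Finset.sum_range_succ']
        have hidx2 : ∀ k, n - (m + 1) + (k + 1) = n - m + k := fun k => by omega
        simp only [hidx2, Nat.add_zero, add_zero, pow_zero, Nat.factorial_zero, Nat.cast_one, mul_one, div_one]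
        ring

  intro x hx
  have h1 := KEY n hn le_rfl x hx
  simp only [Nat.sub_self, zero_add, hF0] at h1
  rw [h1]
  congr 1
  -- the integral term
  have hintg : ∫ t in Set.Ioo a b, max (x - t) 0 ^ n ∂μ =
      ((∫⁻ t in Set.Ioo a b, ENNReal.ofReal (max (x - t) 0 ^ n) ∂μ)).toReal := by
    rw [MeasureTheory.integral_eq_lintegral_of_nonneg_ae]
    · exact Filter.Eventually.of_forall fun t => pow_nonneg (le_max_right _ _) _
    · exact (((continuous_const.sub continuous_id).max continuous_const).pow n).aestronglyMeasurable
  have hsplit : ∫⁻ t in Set.Ioo a b, ENNReal.ofReal (max (x - t) 0 ^ n) ∂μ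
      = ∫⁻ t in Set.Ioc a x, ENNReal.ofReal ((x - t) ^ n) ∂μ := by
    rw [← Set.Ioc_union_Ioo_eq_Ioo hx.1.le hx.2,
      MeasureTheory.lintegral_union measurableSet_Ioo
        (Set.disjoint_left.2 fun t ht ht' => absurd ht'.1 (not_lt.2 ht.2))]
    have h0 : ∫⁻ t in Set.Ioo x b, ENNReal.ofReal (max (x - t) 0 ^ n) ∂μ = 0 := by
      rw [MeasureTheory.setLIntegral_congr_fun_ae (g := fun _ => 0) measurableSet_Ioo
        (Filter.Eventually.of_forall fun t ht => by
          rw [max_eq_right (by linarith [ht.1] : x - t ≤ 0), zero_pow (by omega : n ≠ 0)]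
          simp)]
      exact MeasureTheory.lintegral_zero
    rw [h0, add_zero]
    apply MeasureTheory.setLIntegral_congr_fun_ae measurableSet_Ioc
    refine Filter.Eventually.of_forall fun t ht => ?_
    rw [max_eq_left (by linarith [ht.2] : 0 ≤ x - t)]
  rw [hintg, hsplit, ncr_Gl μ hfin n hn x hx, ENNReal.toReal_mul, ENNReal.toReal_natCast]
  rw [one_div, inv_mul_cancel_left₀ (Nat.cast_ne_zero.2 (Nat.factorial_ne_zero n))]
end

section
/- Suppose f : (a,b) → ℝ has the form f(x) = ∫_{(a,ξ]} (−1)^{n+1}[−(x−u)]₊^n/n! dg₋(u) + ∫_{[ξ,b)} (x−u)₊^n/n! dg₊(u) + Q(x), where ξ ∈ (a,b), g₋ ≤ 0 is non-decreasing right-continuous on (a,b), g₊ ≥ 0 is non-decreasing left-continuous on (a,b), g₋(ξ) = g₊(ξ) = 0, and Q is a polynomial of degree at most n−1. Then f is n-convex on (a,b). -/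
open Set Filter MeasureTheory
open Topology

namespace NCvxAux

open Topology


variable {μ : Measure ℝ} {a b ξ : ℝ}

noncomputable def lk (m : ℕ) (t u : ℝ) : ℝ := if t < u then (u - t) ^ m else 0

noncomputable def rk (m : ℕ) (t u : ℝ) : ℝ := if u ≤ t then (t - u) ^ m else 0

lemma lk_nonneg (m : ℕ) (t u : ℝ) : 0 ≤ lk m t u := by
  unfold lk; split
  · have : t < u := by assumption
    exact pow_nonneg (by linarith) _
  · exact le_rfl

lemma rk_nonneg (m : ℕ) (t u : ℝ) : 0 ≤ rk m t u := by
  unfold rk; split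
  · have : u ≤ t := by assumption
    exact pow_nonneg (by linarith) _
  · exact le_rfl

lemma lk_anti (m : ℕ) (u : ℝ) {t t' : ℝ} (h : t ≤ t') : lk m t' u ≤ lk m t u := by
  unfold lk
  by_cases h' : t' < u
  · rw [if_pos h', if_pos (lt_of_le_of_lt h h')]
    exact pow_le_pow_left₀ (by linarith) (by linarith) m
  · rw [if_neg h']
    by_cases h'' : t < u
    · rw [if_pos h'']; exact pow_nonneg (by linarith) _
    · rw [if_neg h'']

lemma rk_mono (m : ℕ) (u : ℝ) {t t' : ℝ} (h : t ≤ t') : rk m t u ≤ rk m t' u := by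
  unfold rk
  by_cases h' : u ≤ t
  · rw [if_pos h', if_pos (h'.trans h)]
    exact pow_le_pow_left₀ (by linarith) (by linarith) m
  · rw [if_neg h']
    by_cases h'' : u ≤ t'
    · rw [if_pos h'']; exact pow_nonneg (by linarith) _
    · rw [if_neg h'']

lemma lk_meas (m : ℕ) (t : ℝ) : Measurable (lk m t) := by
  unfold lk
  exact Measurable.ite measurableSet_Ioi ((measurable_id.sub_const t).pow_const m)
    measurable_const

lemma rk_meas (m : ℕ) (t : ℝ) : Measurable (rk m t) := by
  unfold rk
  exact Measurable.ite measurableSet_Iic ((measurable_const.sub measurable_id).pow_const m)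
    measurable_const

lemma lk_zero_of_le (m : ℕ) {t u : ℝ} (h : u ≤ t) : lk m t u = 0 := by
  unfold lk; rw [if_neg (not_lt.2 h)]

lemma lk_eq_max (m : ℕ) (hm : 1 ≤ m) (t u : ℝ) : lk m t u = max (u - t) 0 ^ m := by
  unfold lk
  rcases lt_or_ge t u with h | h
  · rw [if_pos h, max_eq_left (by linarith)]
  · rw [if_neg (not_lt.2 h), max_eq_right (by linarith), zero_pow (by omega)]

lemma rk_eq_max (m : ℕ) (hm : 1 ≤ m) (t u : ℝ) : rk m t u = max (t - u) 0 ^ m := by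
  unfold rk
  rcases le_or_gt u t with h | h
  · rw [if_pos h, max_eq_left (by linarith)]
  · rw [if_neg (not_le.2 h), max_eq_right (by linarith), zero_pow (by omega)]

noncomputable def LI (μ : Measure ℝ) (a ξ : ℝ) (m : ℕ) (t : ℝ) : ℝ :=
  ∫ u in Ioc a ξ, lk m t u ∂μ

lemma LI_integrableOn (hfm : ∀ t, a < t → μ (Ioc t ξ) ≠ ⊤) (m : ℕ) {t : ℝ} (ht : a < t) :
    IntegrableOn (lk m t) (Ioc a ξ) μ := by
  set C : ℝ := max (ξ - t) 0 ^ m with hC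
  have hCnn : 0 ≤ C := pow_nonneg (le_max_right _ _) m
  have hg : Integrable ((Ioc t ξ).indicator (fun _ => C)) (μ.restrict (Ioc a ξ)) := by
    rw [integrable_indicator_iff measurableSet_Ioc]
    refine integrableOn_const (ne_of_lt ?_)
    rw [Measure.restrict_apply measurableSet_Ioc]
    exact lt_of_le_of_lt (measure_mono inter_subset_left)
      (lt_top_iff_ne_top.2 (hfm t ht))
  refine hg.mono' (lk_meas m t).aestronglyMeasurable ?_
  rw [ae_restrict_iff' measurableSet_Ioc]
  filter_upwards with u hu
  rcases lt_or_ge t u with h | h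
  · have hu2 := hu.2
    have h1 : lk m t u = (u - t) ^ m := if_pos h
    have h2 : u ∈ Ioc t ξ := ⟨h, hu2⟩
    rw [h1, indicator_of_mem h2, Real.norm_eq_abs, abs_of_nonneg (pow_nonneg (by linarith) m)]
    exact pow_le_pow_left₀ (by linarith) (le_max_of_le_left (by linarith)) m
  · rw [lk_zero_of_le m h, norm_zero]
    exact indicator_nonneg (fun _ _ => hCnn) u

lemma LI_nonneg (m : ℕ) (t : ℝ) : 0 ≤ LI μ a ξ m t :=
  integral_nonneg fun u => lk_nonneg m t u

lemma LI_anti (hfm : ∀ t, a < t → μ (Ioc t ξ) ≠ ⊤) (m : ℕ) :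
    AntitoneOn (LI μ a ξ m) (Ioi a) := fun t ht t' ht' h =>
  integral_mono (LI_integrableOn hfm m ht') (LI_integrableOn hfm m ht)
    (fun u => lk_anti m u h)

lemma LI_zero (m : ℕ) {t : ℝ} (h : ξ ≤ t) : LI μ a ξ m t = 0 := by
  unfold LI
  rw [setIntegral_congr_fun measurableSet_Ioc
    (fun u hu => lk_zero_of_le m (le_trans hu.2 h)), integral_zero]

lemma LI_reduce (hfm : ∀ t, a < t → μ (Ioc t ξ) ≠ ⊤) (m : ℕ) {x t : ℝ}
    (hax : a < x) (hxξ : x ≤ ξ) (hxt : x ≤ t) :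
    LI μ a ξ m t = ∫ u in Ioc x ξ, lk m t u ∂μ := by
  have hint : IntegrableOn (lk m t) (Ioc a ξ) μ :=
    LI_integrableOn hfm m (lt_of_lt_of_le hax hxt)
  have h1 : IntegrableOn (lk m t) (Ioc a x) μ :=
    hint.mono_set (Ioc_subset_Ioc_right hxξ)
  have h2 : IntegrableOn (lk m t) (Ioc x ξ) μ :=
    hint.mono_set (Ioc_subset_Ioc_left hax.le)
  unfold LI
  rw [← Ioc_union_Ioc_eq_Ioc hax.le hxξ,
    setIntegral_union (Set.Ioc_disjoint_Ioc_of_le le_rfl) measurableSet_Ioc h1 h2,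
    setIntegral_congr_fun measurableSet_Ioc
      (fun u hu => lk_zero_of_le m (le_trans hu.2 hxt)), integral_zero, zero_add]

lemma lk_antitone (m : ℕ) (u : ℝ) : Antitone fun t => lk m t u :=
  fun _ _ h => lk_anti m u h

lemma lk_intervalIntegrable (m : ℕ) (u c d : ℝ) :
    IntervalIntegrable (fun t => lk m t u) volume c d :=
  (lk_antitone m u).intervalIntegrable

lemma L_inner (m : ℕ) {x u : ℝ} (hxu : x < u) (huξ : u ≤ ξ) :
    ∫ t in Ioc x ξ, lk m t u = (u - x) ^ (m + 1) / (m + 1) := by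
  have hxξ : x ≤ ξ := hxu.le.trans huξ
  rw [← intervalIntegral.integral_of_le hxξ,
    ← intervalIntegral.integral_add_adjacent_intervals
      (lk_intervalIntegrable m u x u) (lk_intervalIntegrable m u u ξ)]
  have h2 : (∫ t in u..ξ, lk m t u) = 0 := by
    rw [intervalIntegral.integral_congr (g := fun _ => (0 : ℝ))
      (fun t ht => lk_zero_of_le m ?_), intervalIntegral.integral_zero]
    · rw [uIcc_of_le huξ] at ht; exact ht.1
  have h1 : (∫ t in x..u, lk m t u) = ∫ t in x..u, (u - t) ^ m := by
    apply intervalIntegral.integral_congr_ae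
    have hne : ∀ᵐ t : ℝ, t ≠ u := by
      rw [ae_iff]
      convert Real.volume_singleton (a := u) using 2
      ext t; simp
    filter_upwards [hne] with t htne ht
    rw [uIoc_of_le hxu.le] at ht
    have : t < u := lt_of_le_of_ne ht.2 htne
    exact if_pos this
  rw [h2, add_zero, h1, intervalIntegral.integral_comp_sub_left (fun s => s ^ m) u,
    sub_self]
  rw [integral_pow, zero_pow (by omega : m + 1 ≠ 0), sub_zero]

lemma L_step (hfm : ∀ t, a < t → μ (Ioc t ξ) ≠ ⊤) (m : ℕ) {x : ℝ}
    (hax : a < x) (hxξ : x ≤ ξ) :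
    LI μ a ξ (m + 1) x = ((m : ℝ) + 1) * ∫ t in Ioc x ξ, LI μ a ξ m t := by
  have hfin : μ (Ioc x ξ) < ⊤ := lt_top_iff_ne_top.2 (hfm x hax)
  haveI : IsFiniteMeasure (μ.restrict (Ioc x ξ)) :=
    ⟨by rwa [Measure.restrict_apply_univ]⟩
  -- uncurried kernel is integrable on the product
  have hker : Integrable (Function.uncurry fun u t => lk m t u)
      ((μ.restrict (Ioc x ξ)).prod (volume.restrict (Ioc x ξ))) := by
    have hmeas : Measurable (Function.uncurry fun u t => lk m t u) := by
      unfold lk Function.uncurry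
      exact Measurable.ite (measurableSet_lt measurable_snd measurable_fst)
        ((measurable_fst.sub measurable_snd).pow_const m) measurable_const
    refine (integrable_const ((ξ - x) ^ m)).mono' hmeas.aestronglyMeasurable ?_
    have hae1 : ∀ᵐ p : ℝ × ℝ ∂((μ.restrict (Ioc x ξ)).prod (volume.restrict (Ioc x ξ))),
        p.1 ∈ Ioc x ξ := by
      rw [ae_iff]
      have hs : {p : ℝ × ℝ | ¬ p.1 ∈ Ioc x ξ} = (Ioc x ξ)ᶜ ×ˢ univ := by
        ext p; simp
      rw [hs, Measure.prod_prod, Measure.restrict_apply measurableSet_Ioc.compl,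
        compl_inter_self, measure_empty, zero_mul]
    have hae2 : ∀ᵐ p : ℝ × ℝ ∂((μ.restrict (Ioc x ξ)).prod (volume.restrict (Ioc x ξ))),
        p.2 ∈ Ioc x ξ := by
      rw [ae_iff]
      have hs : {p : ℝ × ℝ | ¬ p.2 ∈ Ioc x ξ} = univ ×ˢ (Ioc x ξ)ᶜ := by
        ext p; simp
      rw [hs, Measure.prod_prod, Measure.restrict_apply measurableSet_Ioc.compl,
        compl_inter_self, measure_empty, mul_zero]
    filter_upwards [hae1, hae2] with p hp1 hp2
    simp only [Function.uncurry]
    rcases lt_or_ge p.2 p.1 with h | h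
    · rw [lk, if_pos h, Real.norm_eq_abs, abs_of_nonneg (pow_nonneg (by linarith [hp2.2]) m)]
      exact pow_le_pow_left₀ (by linarith) (by linarith [hp1.2, hp2.1]) m
    · rw [lk_zero_of_le m h, norm_zero]
      have h1 := hp1.1; have h2 := hp2.2
      exact pow_nonneg (by linarith) m
  have hswap := integral_integral_swap hker
  -- LHS of swap: ∫ u, ∫ t, lk m t u dt dμ(u)
  calc LI μ a ξ (m + 1) x
      = ∫ u in Ioc x ξ, lk (m + 1) x u ∂μ := LI_reduce hfm (m + 1) hax hxξ le_rfl
    _ = ∫ u in Ioc x ξ, ((m : ℝ) + 1) * (∫ t in Ioc x ξ, lk m t u) ∂μ := by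
        refine setIntegral_congr_fun measurableSet_Ioc (fun u hu => ?_)
        rw [L_inner m hu.1 hu.2, lk, if_pos hu.1]
        field_simp
    _ = ((m : ℝ) + 1) * ∫ u in Ioc x ξ, (∫ t in Ioc x ξ, lk m t u) ∂μ :=
        integral_const_mul _ _
    _ = ((m : ℝ) + 1) * ∫ t in Ioc x ξ, (∫ u in Ioc x ξ, lk m t u ∂μ) := by rw [hswap]
    _ = ((m : ℝ) + 1) * ∫ t in Ioc x ξ, LI μ a ξ m t := by
        congr 1
        refine setIntegral_congr_fun measurableSet_Ioc (fun t ht => ?_)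
        exact (LI_reduce hfm m hax hxξ ht.1.le).symm

noncomputable def RI (μ : Measure ℝ) (ξ b : ℝ) (m : ℕ) (t : ℝ) : ℝ :=
  ∫ u in Ico ξ b, rk m t u ∂μ

lemma ae_ne_vol (x : ℝ) : ∀ᵐ t : ℝ, t ≠ x := by
  rw [ae_iff]
  convert Real.volume_singleton (a := x) using 2
  ext t; simp

lemma rk_zero_of_lt (m : ℕ) {t u : ℝ} (h : t < u) : rk m t u = 0 := if_neg (not_le.2 h)

lemma rk_monotone (m : ℕ) (u : ℝ) : Monotone fun t => rk m t u :=
  fun _ _ h => rk_mono m u h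

lemma rk_intervalIntegrable (m : ℕ) (u c d : ℝ) :
    IntervalIntegrable (fun t => rk m t u) volume c d :=
  (rk_monotone m u).intervalIntegrable

lemma RI_integrableOn (hfp : ∀ t, t < b → μ (Ico ξ t) ≠ ⊤) (m : ℕ) {t : ℝ} (ht : t < b) :
    IntegrableOn (rk m t) (Ico ξ b) μ := by
  set C : ℝ := max (t - ξ) 0 ^ m with hC
  have hCnn : 0 ≤ C := pow_nonneg (le_max_right _ _) m
  have hsub : Icc ξ t ⊆ Ico ξ ((t + b) / 2) := fun u hu => ⟨hu.1, by
    have := hu.2; simp only [mem_Icc] at *; linarith⟩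
  have hfin : μ (Icc ξ t) < ⊤ :=
    lt_of_le_of_lt (measure_mono hsub) (lt_top_iff_ne_top.2 (hfp _ (by linarith)))
  have hg : Integrable ((Icc ξ t).indicator (fun _ => C)) (μ.restrict (Ico ξ b)) := by
    rw [integrable_indicator_iff measurableSet_Icc]
    refine integrableOn_const (ne_of_lt ?_)
    rw [Measure.restrict_apply measurableSet_Icc]
    exact lt_of_le_of_lt (measure_mono inter_subset_left) hfin
  refine hg.mono' (rk_meas m t).aestronglyMeasurable ?_
  rw [ae_restrict_iff' measurableSet_Ico]
  filter_upwards with u hu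
  obtain ⟨hu1, hu2⟩ := hu
  rcases le_or_gt u t with h | h
  · have h1 : rk m t u = (t - u) ^ m := if_pos h
    have h2 : u ∈ Icc ξ t := ⟨hu1, h⟩
    rw [h1, indicator_of_mem h2, Real.norm_eq_abs, abs_of_nonneg (pow_nonneg (by linarith) m)]
    exact pow_le_pow_left₀ (by linarith) (le_max_of_le_left (by linarith)) m
  · rw [rk_zero_of_lt m h, norm_zero]
    exact indicator_nonneg (fun _ _ => hCnn) u

lemma RI_nonneg (m : ℕ) (t : ℝ) : 0 ≤ RI μ ξ b m t :=
  integral_nonneg fun u => rk_nonneg m t u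

lemma RI_mono (hfp : ∀ t, t < b → μ (Ico ξ t) ≠ ⊤) (m : ℕ) :
    MonotoneOn (RI μ ξ b m) (Iio b) := fun t ht t' ht' h =>
  integral_mono (RI_integrableOn hfp m ht) (RI_integrableOn hfp m ht')
    (fun u => rk_mono m u h)

lemma RI_zero (m : ℕ) {t : ℝ} (h : t ≤ ξ) : RI μ ξ b (m + 1) t = 0 := by
  unfold RI
  rw [setIntegral_congr_fun measurableSet_Ico (g := fun _ => (0 : ℝ))
    (fun u hu => ?_), integral_zero]
  rcases le_or_gt u t with h' | h'
  · have : u = t := le_antisymm h' (h.trans hu.1)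
    rw [rk, if_pos h', this, sub_self, zero_pow (by omega)]
  · exact rk_zero_of_lt _ h'

lemma RI_zero0 (m : ℕ) {t : ℝ} (h : t < ξ) : RI μ ξ b m t = 0 := by
  unfold RI
  rw [setIntegral_congr_fun measurableSet_Ico (g := fun _ => (0 : ℝ))
    (fun u hu => rk_zero_of_lt m (h.trans_le hu.1)), integral_zero]

lemma RI_reduce (hfp : ∀ t, t < b → μ (Ico ξ t) ≠ ⊤) (m : ℕ) {x t : ℝ}
    (hξx : ξ ≤ x) (hxb : x < b) (htx : t ≤ x) :
    RI μ ξ b (m + 1) t = ∫ u in Ico ξ x, rk (m + 1) t u ∂μ := by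
  have hint : IntegrableOn (rk (m + 1) t) (Ico ξ b) μ :=
    RI_integrableOn hfp (m + 1) (lt_of_le_of_lt htx hxb)
  have h1 : IntegrableOn (rk (m + 1) t) (Ico ξ x) μ :=
    hint.mono_set (Ico_subset_Ico_right hxb.le)
  have h2 : IntegrableOn (rk (m + 1) t) (Ico x b) μ :=
    hint.mono_set (Ico_subset_Ico_left hξx)
  unfold RI
  rw [← Ico_union_Ico_eq_Ico hξx hxb.le,
    setIntegral_union Set.Ico_disjoint_Ico_same measurableSet_Ico h1 h2,
    setIntegral_congr_fun (s := Ico x b) measurableSet_Ico (g := fun _ => (0 : ℝ))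
      (fun u hu => ?_),
    integral_zero, add_zero]
  rcases le_or_gt u t with h' | h'
  · have : u = t := le_antisymm h' (htx.trans hu.1)
    rw [rk, if_pos h', this, sub_self, zero_pow (by omega)]
  · exact rk_zero_of_lt _ h'

lemma RI_reduce' (hfp : ∀ t, t < b → μ (Ico ξ t) ≠ ⊤) (m : ℕ) {x t : ℝ}
    (hξx : ξ ≤ x) (hxb : x < b) (htx : t < x) :
    RI μ ξ b m t = ∫ u in Ico ξ x, rk m t u ∂μ := by
  have hint : IntegrableOn (rk m t) (Ico ξ b) μ :=
    RI_integrableOn hfp m (htx.trans hxb)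
  have h1 : IntegrableOn (rk m t) (Ico ξ x) μ :=
    hint.mono_set (Ico_subset_Ico_right hxb.le)
  have h2 : IntegrableOn (rk m t) (Ico x b) μ :=
    hint.mono_set (Ico_subset_Ico_left hξx)
  unfold RI
  rw [← Ico_union_Ico_eq_Ico hξx hxb.le,
    setIntegral_union Set.Ico_disjoint_Ico_same measurableSet_Ico h1 h2,
    setIntegral_congr_fun (s := Ico x b) measurableSet_Ico (g := fun _ => (0 : ℝ))
      (fun u hu => rk_zero_of_lt m (htx.trans_le hu.1)),
    integral_zero, add_zero]

lemma R_inner (m : ℕ) {x u : ℝ} (hξu : ξ ≤ u) (hux : u < x) :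
    ∫ t in Ioc ξ x, rk m t u = (x - u) ^ (m + 1) / (m + 1) := by
  have hξx : ξ ≤ x := hξu.trans hux.le
  rw [← intervalIntegral.integral_of_le hξx,
    ← intervalIntegral.integral_add_adjacent_intervals
      (rk_intervalIntegrable m u ξ u) (rk_intervalIntegrable m u u x)]
  have h1 : (∫ t in ξ..u, rk m t u) = 0 := by
    rw [intervalIntegral.integral_congr_ae (g := fun _ => (0 : ℝ)) ?_,
      intervalIntegral.integral_zero]
    filter_upwards [ae_ne_vol u] with t htne ht
    rw [uIoc_of_le hξu] at ht
    exact rk_zero_of_lt m (lt_of_le_of_ne ht.2 htne)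
  have h2 : (∫ t in u..x, rk m t u) = ∫ t in u..x, (t - u) ^ m := by
    refine intervalIntegral.integral_congr (fun t ht => ?_)
    rw [uIcc_of_le hux.le] at ht
    exact if_pos ht.1
  rw [h1, zero_add, h2, intervalIntegral.integral_comp_sub_right (fun s => s ^ m) u,
    sub_self, integral_pow, zero_pow (by omega : m + 1 ≠ 0), sub_zero]

lemma R_step (hfp : ∀ t, t < b → μ (Ico ξ t) ≠ ⊤) (m : ℕ) {x : ℝ}
    (hξx : ξ ≤ x) (hxb : x < b) :
    RI μ ξ b (m + 1) x = ((m : ℝ) + 1) * ∫ t in Ioc ξ x, RI μ ξ b m t := by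
  have hfin : μ (Ico ξ x) < ⊤ := lt_top_iff_ne_top.2 (hfp x hxb)
  haveI : IsFiniteMeasure (μ.restrict (Ico ξ x)) :=
    ⟨by rwa [Measure.restrict_apply_univ]⟩
  have hker : Integrable (Function.uncurry fun u t => rk m t u)
      ((μ.restrict (Ico ξ x)).prod (volume.restrict (Ioc ξ x))) := by
    have hmeas : Measurable (Function.uncurry fun u t => rk m t u) := by
      unfold rk Function.uncurry
      exact Measurable.ite (measurableSet_le measurable_fst measurable_snd)
        ((measurable_snd.sub measurable_fst).pow_const m) measurable_const
    refine (integrable_const ((x - ξ) ^ m)).mono' hmeas.aestronglyMeasurable ?_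
    have hae1 : ∀ᵐ p : ℝ × ℝ ∂((μ.restrict (Ico ξ x)).prod (volume.restrict (Ioc ξ x))),
        p.1 ∈ Ico ξ x := by
      rw [ae_iff]
      have hs : {p : ℝ × ℝ | ¬ p.1 ∈ Ico ξ x} = (Ico ξ x)ᶜ ×ˢ univ := by ext p; simp
      rw [hs, Measure.prod_prod, Measure.restrict_apply measurableSet_Ico.compl,
        compl_inter_self, measure_empty, zero_mul]
    have hae2 : ∀ᵐ p : ℝ × ℝ ∂((μ.restrict (Ico ξ x)).prod (volume.restrict (Ioc ξ x))),
        p.2 ∈ Ioc ξ x := by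
      rw [ae_iff]
      have hs : {p : ℝ × ℝ | ¬ p.2 ∈ Ioc ξ x} = univ ×ˢ (Ioc ξ x)ᶜ := by ext p; simp
      rw [hs, Measure.prod_prod, Measure.restrict_apply measurableSet_Ioc.compl,
        compl_inter_self, measure_empty, mul_zero]
    filter_upwards [hae1, hae2] with p hp1 hp2
    simp only [Function.uncurry]
    rcases le_or_gt p.1 p.2 with h | h
    · rw [rk, if_pos h, Real.norm_eq_abs, abs_of_nonneg (pow_nonneg (by linarith) m)]
      exact pow_le_pow_left₀ (by linarith) (by linarith [hp1.1, hp2.2]) m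
    · rw [rk_zero_of_lt m h, norm_zero]
      have h1 := hp1.2; have h2 := hp2.1
      exact pow_nonneg (by linarith) m
  have hswap := integral_integral_swap hker
  calc RI μ ξ b (m + 1) x
      = ∫ u in Ico ξ x, rk (m + 1) x u ∂μ := RI_reduce hfp m hξx hxb le_rfl
    _ = ∫ u in Ico ξ x, ((m : ℝ) + 1) * (∫ t in Ioc ξ x, rk m t u) ∂μ := by
        refine setIntegral_congr_fun measurableSet_Ico (fun u hu => ?_)
        rw [R_inner m hu.1 hu.2, rk, if_pos hu.2.le]
        field_simp
    _ = ((m : ℝ) + 1) * ∫ u in Ico ξ x, (∫ t in Ioc ξ x, rk m t u) ∂μ :=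
        integral_const_mul _ _
    _ = ((m : ℝ) + 1) * ∫ t in Ioc ξ x, (∫ u in Ico ξ x, rk m t u ∂μ) := by rw [hswap]
    _ = ((m : ℝ) + 1) * ∫ t in Ioc ξ x, RI μ ξ b m t := by
        congr 1
        refine setIntegral_congr_ae measurableSet_Ioc ?_
        filter_upwards [ae_ne_vol x] with t htne ht
        exact (RI_reduce' hfp m hξx hxb (lt_of_le_of_ne ht.2 htne)).symm

noncomputable def lmA (μ : Measure ℝ) (a ξ : ℝ) (m : ℕ) (x : ℝ) : ℝ :=
  (-1 : ℝ) ^ (m + 1) / (Nat.factorial m) * LI μ a ξ m x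

noncomputable def rpA (μ : Measure ℝ) (ξ b : ℝ) (m : ℕ) (x : ℝ) : ℝ :=
  (1 : ℝ) / (Nat.factorial m) * RI μ ξ b m x

lemma lm_step (hfm : ∀ t, a < t → μ (Ioc t ξ) ≠ ⊤) (m : ℕ) {x : ℝ} (hax : a < x) :
    lmA μ a ξ (m + 1) x = ∫ t in ξ..x, lmA μ a ξ m t := by
  have hfac : ((Nat.factorial m : ℕ) : ℝ) ≠ 0 := Nat.cast_ne_zero.2 m.factorial_ne_zero
  have hm1 : ((m : ℝ) + 1) ≠ 0 := by positivity
  rcases le_or_gt x ξ with hxξ | hξx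
  · rw [intervalIntegral.integral_symm, intervalIntegral.integral_of_le hxξ]
    unfold lmA
    rw [integral_const_mul, L_step hfm m hax hxξ, Nat.factorial_succ]
    push_cast
    rw [pow_succ ((-1 : ℝ)) (m + 1)]
    field_simp
  · unfold lmA
    rw [LI_zero (m + 1) hξx.le, mul_zero, intervalIntegral.integral_of_le hξx.le,
      setIntegral_congr_fun measurableSet_Ioc (g := fun _ => (0 : ℝ))
        (fun t ht => by rw [LI_zero m ht.1.le, mul_zero]),
      integral_zero]

lemma rp_step (hfp : ∀ t, t < b → μ (Ico ξ t) ≠ ⊤) (m : ℕ) {x : ℝ} (hxb : x < b) :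
    rpA μ ξ b (m + 1) x = ∫ t in ξ..x, rpA μ ξ b m t := by
  have hfac : ((Nat.factorial m : ℕ) : ℝ) ≠ 0 := Nat.cast_ne_zero.2 m.factorial_ne_zero
  have hm1 : ((m : ℝ) + 1) ≠ 0 := by positivity
  rcases le_or_gt ξ x with hξx | hxξ
  · rw [intervalIntegral.integral_of_le hξx]
    unfold rpA
    rw [integral_const_mul, R_step hfp m hξx hxb, Nat.factorial_succ]
    push_cast
    field_simp
  · unfold rpA
    rw [RI_zero m hxξ.le, mul_zero, intervalIntegral.integral_symm,
      intervalIntegral.integral_of_le hxξ.le,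
      setIntegral_congr_ae (g := fun _ => (0 : ℝ)) measurableSet_Ioc ?_,
      integral_zero, neg_zero]
    filter_upwards [ae_ne_vol ξ] with t htne ht
    rw [RI_zero0 m (lt_of_le_of_ne ht.2 htne), mul_zero]

lemma chain {G : ℕ → ℝ → ℝ} (hξ : ξ ∈ Ioo a b)
    (hstep : ∀ m, ∀ x ∈ Ioo a b, G (m + 1) x = ∫ t in ξ..x, G m t)
    (hii : ∀ m, ∀ x ∈ Ioo a b, ∀ y ∈ Ioo a b, IntervalIntegrable (G m) volume x y)
    (hms : ∀ m, AEStronglyMeasurable (G m) (volume.restrict (Ioo a b)))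
    (h0 : ∀ x ∈ Ioo a b, ContinuousWithinAt (G 0) (Ici x) x) :
    ∀ m, ∀ x ∈ Ioo a b, ContinuousWithinAt (G m) (Ici x) x ∧
      HasDerivWithinAt (G (m + 1)) (G m x) (Ici x) x := by
  have key : ∀ m, (∀ x ∈ Ioo a b, ContinuousWithinAt (G m) (Ici x) x) →
      ∀ x ∈ Ioo a b, HasDerivWithinAt (G (m + 1)) (G m x) (Ici x) x := by
    intro m hc x hx
    have hmem : Ioo a b ∈ 𝓝 x := isOpen_Ioo.mem_nhds hx
    have hprim : HasDerivWithinAt (fun y => ∫ t in ξ..y, G m t) (G m x) (Ici x) x :=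
      intervalIntegral.integral_hasDerivWithinAt_right (hii m ξ hξ x hx)
        ⟨Ioo a b, mem_nhdsWithin_of_mem_nhds hmem, hms m⟩
        ((hc x hx).mono Ioi_subset_Ici_self)
    refine hprim.congr_of_eventuallyEq ?_ (hstep m x hx)
    filter_upwards [mem_nhdsWithin_of_mem_nhds hmem] with y hy
    exact hstep m y hy
  intro m
  induction m with
  | zero => exact fun x hx => ⟨h0 x hx, key 0 h0 x hx⟩
  | succ m ih =>
    have hc : ∀ x ∈ Ioo a b, ContinuousWithinAt (G (m + 1)) (Ici x) x :=
      fun x hx => ((ih x hx).2).continuousWithinAt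
    exact fun x hx => ⟨hc x hx, key (m + 1) hc x hx⟩

lemma LI0_eq {t : ℝ} (hat : a ≤ t) : LI μ a ξ 0 t = (μ (Ioc t ξ)).toReal := by
  unfold LI
  have h : ∀ u : ℝ, lk 0 t u = (Ioi t).indicator (fun _ => (1 : ℝ)) u := by
    intro u; unfold lk
    by_cases h' : t < u <;> simp [h', indicator_apply, mem_Ioi]
  rw [integral_congr_ae (Eventually.of_forall h),
    integral_indicator_const (1 : ℝ) measurableSet_Ioi,
    measureReal_def, Measure.restrict_apply measurableSet_Ioi, smul_eq_mul, mul_one]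
  have hset : Ioi t ∩ Ioc a ξ = Ioc t ξ := by
    ext u
    simp only [mem_inter_iff, mem_Ioi, mem_Ioc]
    constructor
    · rintro ⟨h1, _, h3⟩; exact ⟨h1, h3⟩
    · rintro ⟨h1, h2⟩; exact ⟨h1, lt_of_le_of_lt hat h1, h2⟩
  rw [hset]

lemma RI0_eq {t : ℝ} (htb : t < b) : RI μ ξ b 0 t = (μ (Icc ξ t)).toReal := by
  unfold RI
  have h : ∀ u : ℝ, rk 0 t u = (Iic t).indicator (fun _ => (1 : ℝ)) u := by
    intro u; unfold rk
    by_cases h' : u ≤ t <;> simp [h', indicator_apply, mem_Iic]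
  rw [integral_congr_ae (Eventually.of_forall h),
    integral_indicator_const (1 : ℝ) measurableSet_Iic,
    measureReal_def, Measure.restrict_apply measurableSet_Iic, smul_eq_mul, mul_one]
  have hset : Iic t ∩ Ico ξ b = Icc ξ t := by
    ext u
    simp only [mem_inter_iff, mem_Iic, mem_Ico, mem_Icc]
    constructor
    · rintro ⟨h1, h2, _⟩; exact ⟨h2, h1⟩
    · rintro ⟨h1, h2⟩; exact ⟨h2, h1, lt_of_le_of_lt h2 htb⟩
  rw [hset]

lemma Icc_fin (hfp : ∀ t, t < b → μ (Ico ξ t) ≠ ⊤) {t : ℝ} (htb : t < b) :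
    μ (Icc ξ t) ≠ ⊤ := by
  have hsub : Icc ξ t ⊆ Ico ξ ((t + b) / 2) := fun u hu =>
    ⟨hu.1, by have := hu.2; linarith⟩
  exact fun h => hfp _ (by linarith : (t + b) / 2 < b)
    (eq_top_iff.2 (h ▸ measure_mono hsub))

lemma RI0_rightCont (hfp : ∀ t, t < b → μ (Ico ξ t) ≠ ⊤) {x : ℝ} (hxb : x < b) :
    ContinuousWithinAt (RI μ ξ b 0) (Ici x) x := by
  set d : ℝ := (b - x) / 2 with hd
  have hd0 : 0 < d := by simp only [hd]; linarith
  have hxdb : x + d < b := by simp only [hd]; linarith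
  set s : ℕ → Set ℝ := fun k => Icc ξ (x + d / (k + 1)) with hs
  have hdk : ∀ k : ℕ, 0 < d / ((k : ℝ) + 1) := fun k => by positivity
  have hdkd : ∀ k : ℕ, d / ((k : ℝ) + 1) ≤ d := fun k =>
    div_le_self hd0.le (by push_cast; linarith [Nat.cast_nonneg (α := ℝ) k])
  have hskb : ∀ k : ℕ, x + d / ((k : ℝ) + 1) < b := fun k =>
    lt_of_le_of_lt (by linarith [hdkd k]) hxdb
  have hanti : Antitone s := by
    intro k k' hkk'
    refine Icc_subset_Icc_right (add_le_add le_rfl ?_)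
    exact div_le_div_of_nonneg_left hd0.le (by positivity)
      (by exact_mod_cast Nat.add_le_add_right hkk' 1)
  have hlim' : Tendsto (fun k : ℕ => x + d / ((k : ℝ) + 1)) atTop (𝓝 x) := by
    have h1 : Tendsto (fun k : ℕ => d / ((k : ℝ) + 1)) atTop (𝓝 0) := by
      have := tendsto_one_div_add_atTop_nhds_zero_nat (𝕜 := ℝ)
      have h2 := this.const_mul d
      simpa [div_eq_mul_inv, mul_comm] using h2
    simpa using tendsto_const_nhds.add h1
  have hiInter : ⋂ k, s k = Icc ξ x := by
    apply Subset.antisymm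
    · intro u hu
      simp only [mem_iInter] at hu
      exact ⟨(hu 0).1, ge_of_tendsto' hlim' (fun k => (hu k).2)⟩
    · intro u hu
      simp only [mem_iInter]
      exact fun k => ⟨hu.1, hu.2.trans (by linarith [hdk k])⟩
  have hseq : Tendsto (fun k => μ (s k)) atTop (𝓝 (μ (Icc ξ x))) := by
    have := tendsto_measure_iInter_atTop (μ := μ)
      (fun k => (measurableSet_Icc).nullMeasurableSet) hanti
      ⟨0, Icc_fin hfp (by simpa using hskb 0)⟩
    rwa [hiInter] at this
  have hfinx : μ (Icc ξ x) ≠ ⊤ := Icc_fin hfp hxb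
  have hseqR : Tendsto (fun k => (μ (s k)).toReal) atTop (𝓝 ((μ (Icc ξ x)).toReal)) :=
    (ENNReal.tendsto_toReal hfinx).comp hseq
  -- now prove continuity within Ici x
  have hRIx : RI μ ξ b 0 x = (μ (Icc ξ x)).toReal := RI0_eq hxb
  rw [ContinuousWithinAt]
  refine tendsto_order.2 ⟨fun c hc => ?_, fun c hc => ?_⟩
  · -- c < RI x ≤ RI y eventually
    have hmem : Iio b ∈ 𝓝[Ici x] x :=
      mem_nhdsWithin_of_mem_nhds (Iio_mem_nhds hxb)
    filter_upwards [hmem, self_mem_nhdsWithin] with y hy hxy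
    exact lt_of_lt_of_le hc (RI_mono hfp 0 hxb hy hxy)
  · -- find k with (μ (s k)).toReal < c
    rw [hRIx] at hc
    obtain ⟨k, hk⟩ := (hseqR.eventually_lt_const hc).exists
    set y0 : ℝ := x + d / ((k : ℝ) + 1) with hy0
    have hy0b : y0 < b := hskb k
    have hxy0 : x < y0 := by have := hdk k; simp only [hy0]; linarith
    have hmem : Iio y0 ∩ Iio b ∈ 𝓝[Ici x] x :=
      mem_nhdsWithin_of_mem_nhds (inter_mem (Iio_mem_nhds hxy0) (Iio_mem_nhds hxb))
    filter_upwards [hmem, self_mem_nhdsWithin] with y hy hxy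
    calc RI μ ξ b 0 y ≤ RI μ ξ b 0 y0 := RI_mono hfp 0 hy.2 hy0b hy.1.le
      _ = (μ (s k)).toReal := RI0_eq hy0b
      _ < c := hk

end NCvxAux

open NCvxAux

/-- Divided difference of `f` at the points `x 0, ..., x (m-1)`. -/
noncomputable def divDiff (f : ℝ → ℝ) {m : ℕ} (x : Fin m → ℝ) : ℝ :=
  ∑ i, f (x i) / ∏ j ∈ Finset.univ.erase i, (x i - x j)

/-- `f` is `n`-convex on `(a,b)` in the sense of Popoviciu: all its `(n+2)`-point
divided differences at increasing points of `(a,b)` are nonnegative. -/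
def PopoviciuConvexOn (n : ℕ) (a b : ℝ) (f : ℝ → ℝ) : Prop :=
  ∀ x : Fin (n + 2) → ℝ, StrictMono x → (∀ i, x i ∈ Set.Ioo a b) → 0 ≤ divDiff f x

/-- `F` is a chain of successive right derivatives of length `n` on `(a,b)`. -/
def IsRightDerivChainOn (F : ℕ → ℝ → ℝ) (n : ℕ) (a b : ℝ) : Prop :=
  ∀ k < n, ∀ x ∈ Set.Ioo a b, HasDerivWithinAt (F k) (F (k + 1) x) (Set.Ici x) x

/-- `f` is `n`-convex on `(a,b)`: its right `n`-th derivative (obtained by `n`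
successive right derivatives) exists at every point of `(a,b)` and is non-decreasing. -/
def NConvexOn (n : ℕ) (a b : ℝ) (f : ℝ → ℝ) : Prop :=
  ∃ F : ℕ → ℝ → ℝ, F 0 = f ∧ IsRightDerivChainOn F n a b ∧
    MonotoneOn (F n) (Set.Ioo a b)

/-- If `f` has the integral representation
`f(x) = ∫_{(a,ξ]} (-1)^{n+1}[-(x-u)]₊ⁿ/n! dg₋(u) + ∫_{[ξ,b)} (x-u)₊ⁿ/n! dg₊(u) + Q(x)`,
where `ξ ∈ (a,b)`, `g₋ ≤ 0` is non-decreasing right-continuous, `g₊ ≥ 0` is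
non-decreasing left-continuous, `g₋(ξ) = g₊(ξ) = 0` and `Q ∈ Π_{n-1}`, then `f` is
`n`-convex on `(a,b)`. The measures `μm`, `μp` are the Lebesgue–Stieltjes measures of
`g₋` and `g₊`. -/
theorem integral_representation_nconvex (n : ℕ) (hn : 1 ≤ n) (a b ξ : ℝ)
    (hξ : ξ ∈ Set.Ioo a b) (f gm gp : ℝ → ℝ) (μm μp : Measure ℝ) (Q : Polynomial ℝ)
    (hgm_mono : MonotoneOn gm (Set.Ioo a b))
    (hgm_nonpos : ∀ x ∈ Set.Ioo a b, gm x ≤ 0)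
    (hgm_rc : ∀ x ∈ Set.Ioo a b, ContinuousWithinAt gm (Set.Ici x) x)
    (hgp_mono : MonotoneOn gp (Set.Ioo a b))
    (hgp_nonneg : ∀ x ∈ Set.Ioo a b, 0 ≤ gp x)
    (hgp_lc : ∀ x ∈ Set.Ioo a b, ContinuousWithinAt gp (Set.Iic x) x)
    (hgmξ : gm ξ = 0) (hgpξ : gp ξ = 0)
    (hμm : ∀ u v, a < u → u ≤ v → v ≤ ξ →
      μm (Set.Ioc u v) = ENNReal.ofReal (gm v - gm u))
    (hμp : ∀ u v, ξ ≤ u → u ≤ v → v < b →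
      μp (Set.Ico u v) = ENNReal.ofReal (gp v - gp u))
    (hQ : Q.natDegree ≤ n - 1)
    (hrep : ∀ x ∈ Set.Ioo a b, f x =
      (∫ u in Set.Ioc a ξ, (-1 : ℝ) ^ (n + 1) * max (u - x) 0 ^ n / (Nat.factorial n) ∂μm) +
      (∫ u in Set.Ico ξ b, max (x - u) 0 ^ n / (Nat.factorial n) ∂μp) +
      Q.eval x) :
    NConvexOn n a b f := by
  obtain ⟨haξ, hξb⟩ := hξ
  have hξm : ξ ∈ Ioo a b := ⟨haξ, hξb⟩
  -- finiteness
  have hfm : ∀ t, a < t → μm (Ioc t ξ) ≠ ⊤ := by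
    intro t hat
    rcases le_or_gt t ξ with h | h
    · rw [hμm t ξ hat h le_rfl]; exact ENNReal.ofReal_ne_top
    · rw [Ioc_eq_empty (not_lt.2 h.le), measure_empty]; exact ENNReal.zero_ne_top
  have hfp : ∀ t, t < b → μp (Ico ξ t) ≠ ⊤ := by
    intro t htb
    rcases le_or_gt ξ t with h | h
    · rw [hμp ξ t le_rfl h htb]; exact ENNReal.ofReal_ne_top
    · rw [Ico_eq_empty (not_lt.2 h.le), measure_empty]; exact ENNReal.zero_ne_top
  -- the bottom of the left chain is gm
  have hgm0 : ∀ t ∈ Ioo a b, lmA μm a ξ 0 t = gm t := by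
    intro t ht
    have h1 : lmA μm a ξ 0 t = -(μm (Ioc t ξ)).toReal := by
      unfold lmA
      rw [LI0_eq ht.1.le]
      norm_num
    rcases le_or_gt t ξ with h | h
    · rw [h1, hμm t ξ ht.1 h le_rfl, hgmξ, zero_sub,
        ENNReal.toReal_ofReal (by linarith [hgm_nonpos t ht])]
      ring
    · rw [h1, Ioc_eq_empty (not_lt.2 h.le), measure_empty, ENNReal.toReal_zero, neg_zero]
      have h2 : gm ξ ≤ gm t := hgm_mono hξm ht h.le
      have h3 : gm t ≤ 0 := hgm_nonpos t ht
      rw [hgmξ] at h2; linarith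
  -- chain facts for the left part
  have hchainL := chain (G := lmA μm a ξ) hξm
    (fun m x hx => lm_step hfm m hx.1)
    (fun m x hx y hy => by
      have hanti : AntitoneOn (LI μm a ξ m) (uIcc x y) := by
        refine (LI_anti hfm m).mono (fun z hz => ?_)
        rw [uIcc_eq_union] at hz
        rcases hz with hz | hz
        · exact lt_of_lt_of_le hx.1 hz.1
        · exact lt_of_lt_of_le hy.1 hz.1
      show IntervalIntegrable
        (fun t => (-1 : ℝ) ^ (m + 1) / (Nat.factorial m) * LI μm a ξ m t) volume x y
      exact hanti.intervalIntegrable.const_mul _)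
    (fun m => by
      have := aemeasurable_restrict_of_antitoneOn (μ := volume) measurableSet_Ioo
        ((LI_anti hfm m).mono (fun z hz => hz.1) : AntitoneOn (LI μm a ξ m) (Ioo a b))
      show AEStronglyMeasurable
        (fun t => (-1 : ℝ) ^ (m + 1) / (Nat.factorial m) * LI μm a ξ m t)
        (volume.restrict (Ioo a b))
      exact (this.const_mul _).aestronglyMeasurable)
    (fun x hx => by
      refine (hgm_rc x hx).congr_of_eventuallyEq ?_ (hgm0 x hx)
      filter_upwards [mem_nhdsWithin_of_mem_nhds (isOpen_Ioo.mem_nhds hx)] with y hy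
      exact hgm0 y hy)
  -- chain facts for the right part
  have hchainR := chain (G := rpA μp ξ b) hξm
    (fun m x hx => rp_step hfp m hx.2)
    (fun m x hx y hy => by
      have hmono : MonotoneOn (RI μp ξ b m) (uIcc x y) := by
        refine (RI_mono hfp m).mono (fun z hz => ?_)
        rw [uIcc_eq_union] at hz
        rcases hz with hz | hz
        · exact lt_of_le_of_lt hz.2 hy.2
        · exact lt_of_le_of_lt hz.2 hx.2
      show IntervalIntegrable
        (fun t => (1 : ℝ) / (Nat.factorial m) * RI μp ξ b m t) volume x y
      exact hmono.intervalIntegrable.const_mul _)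
    (fun m => by
      have := aemeasurable_restrict_of_monotoneOn (μ := volume) measurableSet_Ioo
        ((RI_mono hfp m).mono (fun z hz => hz.2) : MonotoneOn (RI μp ξ b m) (Ioo a b))
      show AEStronglyMeasurable
        (fun t => (1 : ℝ) / (Nat.factorial m) * RI μp ξ b m t)
        (volume.restrict (Ioo a b))
      exact (this.const_mul _).aestronglyMeasurable)
    (fun x hx => by
      show ContinuousWithinAt
        (fun t => (1 : ℝ) / (Nat.factorial 0) * RI μp ξ b 0 t) (Ici x) x
      exact continuousWithinAt_const.mul (RI0_rightCont hfp hx.2))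
  -- the chain of right derivatives
  refine ⟨fun k => if k = 0 then f else fun x =>
      lmA μm a ξ (n - k) x + rpA μp ξ b (n - k) x + (Polynomial.derivative^[k] Q).eval x,
    if_pos rfl, ?_, ?_⟩
  · -- IsRightDerivChainOn
    intro k hk x hx
    beta_reduce
    obtain ⟨m, hm⟩ : ∃ m, n - k = m + 1 := ⟨n - k - 1, by omega⟩
    have hm' : n - (k + 1) = m := by omega
    have hL : HasDerivWithinAt (lmA μm a ξ (m + 1)) (lmA μm a ξ m x) (Ici x) x :=
      (hchainL m x hx).2
    have hR : HasDerivWithinAt (rpA μp ξ b (m + 1)) (rpA μp ξ b m x) (Ici x) x :=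
      (hchainR m x hx).2
    have hP : HasDerivWithinAt (fun y => (Polynomial.derivative^[k] Q).eval y)
        ((Polynomial.derivative^[k + 1] Q).eval x) (Ici x) x := by
      rw [Function.iterate_succ_apply']
      exact (Polynomial.hasDerivAt (Polynomial.derivative^[k] Q) x).hasDerivWithinAt
    have hsum : HasDerivWithinAt (fun y =>
        lmA μm a ξ (n - k) y + rpA μp ξ b (n - k) y + (Polynomial.derivative^[k] Q).eval y)
        (lmA μm a ξ (n - (k + 1)) x + rpA μp ξ b (n - (k + 1)) x +
          (Polynomial.derivative^[k + 1] Q).eval x) (Ici x) x := by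
      rw [hm, hm']
      exact (hL.add hR).add hP
    have htarget : (if k + 1 = 0 then f else fun x =>
        lmA μm a ξ (n - (k + 1)) x + rpA μp ξ b (n - (k + 1)) x +
          (Polynomial.derivative^[k + 1] Q).eval x) x =
        lmA μm a ξ (n - (k + 1)) x + rpA μp ξ b (n - (k + 1)) x +
          (Polynomial.derivative^[k + 1] Q).eval x := by
      rw [if_neg (Nat.succ_ne_zero k)]
    rw [htarget]
    rcases Nat.eq_zero_or_pos k with hk0 | hk0
    · -- k = 0 : congruence with f via the representation
      subst hk0
      simp only [if_pos rfl]
      have hfeq : ∀ y ∈ Ioo a b, f y =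
          lmA μm a ξ (n - 0) y + rpA μp ξ b (n - 0) y +
            (Polynomial.derivative^[0] Q).eval y := by
        intro y hy
        rw [hrep y hy]
        simp only [Nat.sub_zero, Function.iterate_zero_apply]
        congr 1
        congr 1
        · -- left integral
          unfold lmA LI
          rw [← integral_const_mul]
          refine integral_congr_ae (Eventually.of_forall (fun u => ?_))
          beta_reduce
          rw [lk_eq_max n hn]
          ring
        · -- right integral
          unfold rpA RI
          rw [← integral_const_mul]
          refine integral_congr_ae (Eventually.of_forall (fun u => ?_))
          beta_reduce
          rw [rk_eq_max n hn]
          ring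
      refine hsum.congr_of_eventuallyEq ?_ (hfeq x hx)
      filter_upwards [mem_nhdsWithin_of_mem_nhds (isOpen_Ioo.mem_nhds hx)] with y hy
      exact hfeq y hy
    · rw [if_neg (by omega : ¬ k = 0)]
      exact hsum
  · -- monotonicity of F n
    beta_reduce
    rw [if_neg (by omega : ¬ n = 0)]
    have hQn : (Polynomial.derivative^[n] Q) = 0 :=
      Polynomial.iterate_derivative_eq_zero (by omega)
    intro s hs t ht hst
    simp only [Nat.sub_self, hQn, Polynomial.eval_zero, add_zero]
    have h1 : lmA μm a ξ 0 s ≤ lmA μm a ξ 0 t := by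
      rw [hgm0 s hs, hgm0 t ht]; exact hgm_mono hs ht hst
    have h2 : rpA μp ξ b 0 s ≤ rpA μp ξ b 0 t := by
      unfold rpA
      have := RI_mono hfp 0 hs.2 ht.2 hst
      have hpos : (0 : ℝ) < 1 / (Nat.factorial 0 : ℝ) := by norm_num
      exact mul_le_mul_of_nonneg_left this hpos.le
    exact add_le_add h1 h2
end

section
/- Let f, g : (a,b) → ℝ be n-convex functions. Then f ⪰ₙ g (i.e. f − g is n-convex) if and only if the Lebesgue–Stieltjes measures df_R^{(n)} and dg_R^{(n)} generated by the non-decreasing right-continuous functions f_R^{(n)} and g_R^{(n)} satisfy df_R^{(n)} ≥ dg_R^{(n)} as Borel measures on (a,b). -/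
open Set Filter MeasureTheory
open scoped Topology

/-- Local comparison: on an interval `Ioc u v ⊆ (a,b)`, if `Fn - Gn` is monotone then
`μg ≤ μf` on measurable subsets. -/
lemma aux_measure_le_on_Ioc (a b : ℝ) (Fn Gn : ℝ → ℝ) (μf μg : Measure ℝ)
    (hGmono : MonotoneOn Gn (Set.Ioo a b))
    (hFrc : ∀ x ∈ Set.Ioo a b, ContinuousWithinAt Fn (Set.Ici x) x)
    (hGrc : ∀ x ∈ Set.Ioo a b, ContinuousWithinAt Gn (Set.Ici x) x)
    (hμf : ∀ u ∈ Set.Ioo a b, ∀ v ∈ Set.Ioo a b, u ≤ v →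
      μf (Set.Ioc u v) = ENNReal.ofReal (Fn v - Fn u))
    (hμg : ∀ u ∈ Set.Ioo a b, ∀ v ∈ Set.Ioo a b, u ≤ v →
      μg (Set.Ioc u v) = ENNReal.ofReal (Gn v - Gn u))
    (hmono : MonotoneOn (fun x => Fn x - Gn x) (Set.Ioo a b))
    (u v : ℝ) (hu : u ∈ Set.Ioo a b) (hv : v ∈ Set.Ioo a b) (huv : u ≤ v)
    (B : Set ℝ) (hBm : MeasurableSet B) (hB : B ⊆ Set.Ioc u v) :
    μg B ≤ μf B := by
  set c : ℝ → ℝ := fun x => min v (max u x) with hc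
  have hc_mem : ∀ x, c x ∈ Set.Icc u v :=
    fun x => ⟨le_min huv (le_max_left _ _), min_le_left _ _⟩
  have hIcc : Set.Icc u v ⊆ Set.Ioo a b := Set.Icc_subset_Ioo hu.1 hv.2
  have hc_mono : Monotone c :=
    fun x y hxy => min_le_min le_rfl (max_le_max le_rfl hxy)
  have hc_clamp : ∀ x ∈ Set.Icc u v, c x = x := by
    intro x hx
    simp [hc, max_eq_right hx.1, min_eq_right hx.2]
  have hc_cont : Continuous c := continuous_const.min (continuous_const.max continuous_id)
  set S : StieltjesFunction ℝ :=
    { toFun := fun x => Fn (c x) - Gn (c x)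
      mono' := fun x y hxy => hmono (hIcc (hc_mem x)) (hIcc (hc_mem y)) (hc_mono hxy)
      right_continuous' := by
        intro x
        have hcx : c x ∈ Set.Ioo a b := hIcc (hc_mem x)
        have h1 : ContinuousWithinAt (fun t => Fn t - Gn t) (Set.Ici (c x)) (c x) :=
          (hFrc _ hcx).sub (hGrc _ hcx)
        have h2 : ContinuousWithinAt c (Set.Ici x) x := hc_cont.continuousWithinAt
        exact h1.comp h2 (fun y hy => hc_mono hy) } with hS
  have key : μf.restrict (Set.Ioc u v) = (μg + S.measure).restrict (Set.Ioc u v) := by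
    refine Measure.ext_of_Ioc' _ _ ?_ ?_
    · intro s t _
      rw [Measure.restrict_apply measurableSet_Ioc]
      refine (lt_of_le_of_lt (measure_mono inter_subset_right) ?_).ne
      rw [hμf u hu v hv huv]
      exact ENNReal.ofReal_lt_top
    · intro s t _
      rw [Measure.restrict_apply measurableSet_Ioc, Measure.restrict_apply measurableSet_Ioc,
        Set.Ioc_inter_Ioc]
      set s' := max s u with hs'def
      set t' := min t v with ht'def
      by_cases h : s' < t'
      · have hs'mem : s' ∈ Set.Icc u v := ⟨le_max_right _ _, le_of_lt (h.trans_le (min_le_right _ _))⟩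
        have ht'mem : t' ∈ Set.Icc u v := ⟨(hs'mem.1.trans h.le), min_le_right _ _⟩
        have hs'' : s' ∈ Set.Ioo a b := hIcc hs'mem
        have ht'' : t' ∈ Set.Ioo a b := hIcc ht'mem
        have hadd : (μg + S.measure) (Set.Ioc s' t') = μg (Set.Ioc s' t') + S.measure (Set.Ioc s' t') := rfl
        rw [hadd, hμf s' hs'' t' ht'' h.le, hμg s' hs'' t' ht'' h.le, StieltjesFunction.measure_Ioc]
        have hSs : S s' = Fn s' - Gn s' := by
          show Fn (c s') - Gn (c s') = _
          rw [hc_clamp s' hs'mem]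
        have hSt : S t' = Fn t' - Gn t' := by
          show Fn (c t') - Gn (c t') = _
          rw [hc_clamp t' ht'mem]
        have h1 : (0:ℝ) ≤ Gn t' - Gn s' := sub_nonneg.2 (hGmono hs'' ht'' h.le)
        have h2 : (0:ℝ) ≤ (Fn t' - Gn t') - (Fn s' - Gn s') := sub_nonneg.2 (hmono hs'' ht'' h.le)
        rw [hSs, hSt]
        rw [show Fn t' - Fn s' = (Gn t' - Gn s') + ((Fn t' - Gn t') - (Fn s' - Gn s')) by ring,
          ENNReal.ofReal_add h1 h2]
      · rw [Set.Ioc_eq_empty h]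
        simp
  calc μg B ≤ (μg + S.measure) B := le_self_add
    _ = (μg + S.measure) (B ∩ Set.Ioc u v) := by rw [Set.inter_eq_left.2 hB]
    _ = (μg + S.measure).restrict (Set.Ioc u v) B := (Measure.restrict_apply hBm).symm
    _ = μf.restrict (Set.Ioc u v) B := by rw [key]
    _ = μf (B ∩ Set.Ioc u v) := Measure.restrict_apply hBm
    _ = μf B := by rw [Set.inter_eq_left.2 hB]

/-- Global comparison via exhaustion of `(a,b)` by the intervals `Ioc (a+εₖ) (b-εₖ)`. -/
lemma aux_measure_le (a b : ℝ) (hab : a < b) (Fn Gn : ℝ → ℝ) (μf μg : Measure ℝ)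
    (hGmono : MonotoneOn Gn (Set.Ioo a b))
    (hFrc : ∀ x ∈ Set.Ioo a b, ContinuousWithinAt Fn (Set.Ici x) x)
    (hGrc : ∀ x ∈ Set.Ioo a b, ContinuousWithinAt Gn (Set.Ici x) x)
    (hμf : ∀ u ∈ Set.Ioo a b, ∀ v ∈ Set.Ioo a b, u ≤ v →
      μf (Set.Ioc u v) = ENNReal.ofReal (Fn v - Fn u))
    (hμg : ∀ u ∈ Set.Ioo a b, ∀ v ∈ Set.Ioo a b, u ≤ v →
      μg (Set.Ioc u v) = ENNReal.ofReal (Gn v - Gn u))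
    (hmono : MonotoneOn (fun x => Fn x - Gn x) (Set.Ioo a b))
    (B : Set ℝ) (hB : B ⊆ Set.Ioo a b) (hBm : MeasurableSet B) :
    μg B ≤ μf B := by
  have hba : (0:ℝ) < b - a := sub_pos.2 hab
  set ε : ℕ → ℝ := fun k => (b - a) / (k + 3) with hε
  have hεpos : ∀ k, 0 < ε k := fun k => div_pos hba (by positivity)
  have hεlt : ∀ k, ε k < b - a := by
    intro k
    rw [hε]
    rw [div_lt_iff₀ (by positivity)]
    nlinarith [hba, (Nat.cast_nonneg k : (0:ℝ) ≤ k)]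
  have hεanti : Antitone ε := by
    intro j k hjk
    have : (j:ℝ) ≤ k := Nat.cast_le.2 hjk
    exact div_le_div_of_nonneg_left hba.le (by positivity) (by linarith)
  set uu : ℕ → ℝ := fun k => a + ε k with huu
  set vv : ℕ → ℝ := fun k => b - ε k with hvv
  have huvk : ∀ k, uu k ≤ vv k := by
    intro k
    have : 2 * ε k ≤ b - a := by
      have : ε k ≤ (b - a) / 2 := by
        rw [hε]
        apply div_le_div_of_nonneg_left hba.le (by norm_num)
        have := (Nat.cast_nonneg k : (0:ℝ) ≤ k); linarith
      linarith
    simp only [huu, hvv]; linarith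
  have humem : ∀ k, uu k ∈ Set.Ioo a b := by
    intro k; exact ⟨by simp only [huu]; linarith [hεpos k], by simp only [huu]; linarith [hεlt k]⟩
  have hvmem : ∀ k, vv k ∈ Set.Ioo a b := by
    intro k; exact ⟨by simp only [hvv]; linarith [hεlt k], by simp only [hvv]; linarith [hεpos k]⟩
  set s : ℕ → Set ℝ := fun k => B ∩ Set.Ioc (uu k) (vv k) with hs
  have hsmono : Monotone s := by
    intro j k hjk
    refine Set.inter_subset_inter le_rfl (Set.Ioc_subset_Ioc ?_ ?_)
    · simp only [huu]; linarith [hεanti hjk]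
    · simp only [hvv]; linarith [hεanti hjk]
  have hcover : B = ⋃ k, s k := by
    apply Set.Subset.antisymm
    · intro x hx
      have hx' : x ∈ Set.Ioo a b := hB hx
      set m := min (x - a) (b - x) with hm
      have hmpos : 0 < m := lt_min (sub_pos.2 hx'.1) (sub_pos.2 hx'.2)
      obtain ⟨N, hN⟩ := exists_nat_gt ((b - a) / m)
      have hNε : ε N < m := by
        rw [hε, div_lt_iff₀ (by positivity : (0:ℝ) < (N:ℝ) + 3)]
        have : b - a < (N:ℝ) * m := (div_lt_iff₀ hmpos).1 hN
        nlinarith [hmpos]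
      refine Set.mem_iUnion.2 ⟨N, hx, ?_, ?_⟩
      · simp only [huu]
        have : ε N < x - a := hNε.trans_le (min_le_left _ _)
        linarith
      · simp only [hvv]
        have : ε N < b - x := hNε.trans_le (min_le_right _ _)
        linarith
    · exact Set.iUnion_subset fun k => Set.inter_subset_left
  have hdir : Directed (· ⊆ ·) s := hsmono.directed_le
  calc μg B = μg (⋃ k, s k) := by rw [← hcover]
    _ = ⨆ k, μg (s k) := hdir.measure_iUnion
    _ ≤ μf B := by
        refine iSup_le fun k => ?_
        have h1 : μg (s k) ≤ μf (s k) :=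
          aux_measure_le_on_Ioc a b Fn Gn μf μg hGmono hFrc hGrc hμf hμg hmono
            (uu k) (vv k) (humem k) (hvmem k) (huvk k)
            (s k) (hBm.inter measurableSet_Ioc) Set.inter_subset_right
        exact h1.trans (measure_mono Set.inter_subset_left)

/-- Let `f`, `g` be `n`-convex on `(a,b)` with right-derivative chains `F`, `G` whose
`n`-th terms are non-decreasing and right-continuous, and let `μf`, `μg` be the
Lebesgue–Stieltjes measures they generate on `(a,b)`. Then `f - g` is `n`-convex
(i.e. `f ⪰ₙ g`) iff `μf ≥ μg` on Borel subsets of `(a,b)`. -/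
theorem relative_nconvex_iff_measures (n : ℕ) (hn : 1 ≤ n) (a b : ℝ) (hab : a < b)
    (f g : ℝ → ℝ) (F G : ℕ → ℝ → ℝ) (μf μg : Measure ℝ)
    (hF0 : F 0 = f) (hG0 : G 0 = g)
    (hFchain : IsRightDerivChainOn F n a b) (hGchain : IsRightDerivChainOn G n a b)
    (hFmono : MonotoneOn (F n) (Set.Ioo a b)) (hGmono : MonotoneOn (G n) (Set.Ioo a b))
    (hFrc : ∀ x ∈ Set.Ioo a b, ContinuousWithinAt (F n) (Set.Ici x) x)
    (hGrc : ∀ x ∈ Set.Ioo a b, ContinuousWithinAt (G n) (Set.Ici x) x)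
    (hμf : ∀ u ∈ Set.Ioo a b, ∀ v ∈ Set.Ioo a b, u ≤ v →
      μf (Set.Ioc u v) = ENNReal.ofReal (F n v - F n u))
    (hμg : ∀ u ∈ Set.Ioo a b, ∀ v ∈ Set.Ioo a b, u ≤ v →
      μg (Set.Ioc u v) = ENNReal.ofReal (G n v - G n u)) :
    NConvexOn n a b (f - g) ↔
      ∀ B ⊆ Set.Ioo a b, MeasurableSet B → μg B ≤ μf B := by
  constructor
  · rintro ⟨H, hH0, hHchain, hHmono⟩
    -- uniqueness of the right-derivative chain on (a,b)
    have key : ∀ k, k ≤ n → ∀ x ∈ Set.Ioo a b, H k x = F k x - G k x := by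
      intro k
      induction k with
      | zero =>
        intro _ x _
        rw [hH0, hF0, hG0]; rfl
      | succ k ih =>
        intro hk x hx
        have hk' : k < n := Nat.lt_of_succ_le hk
        have h1 := hHchain k hk' x hx
        have h2 : HasDerivWithinAt (fun y => F k y - G k y)
            (F (k+1) x - G (k+1) x) (Set.Ici x) x :=
          (hFchain k hk' x hx).sub (hGchain k hk' x hx)
        have heq : H k =ᶠ[𝓝[Set.Ici x] x] (fun y => F k y - G k y) := by
          have hmem : Set.Ioo a b ∈ 𝓝[Set.Ici x] x :=
            nhdsWithin_le_nhds (isOpen_Ioo.mem_nhds hx)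
          filter_upwards [hmem] with y hy using ih hk'.le y hy
        have h2' : HasDerivWithinAt (H k) (F (k+1) x - G (k+1) x) (Set.Ici x) x :=
          h2.congr_of_eventuallyEq heq (ih hk'.le x hx)
        have hud : UniqueDiffWithinAt ℝ (Set.Ici x) x :=
          (uniqueDiffOn_Ici x) x Set.self_mem_Ici
        rw [← h1.derivWithin hud, h2'.derivWithin hud]
    have hmono' : MonotoneOn (fun x => F n x - G n x) (Set.Ioo a b) := by
      intro x hx y hy hxy
      have := hHmono hx hy hxy
      rwa [key n le_rfl x hx, key n le_rfl y hy] at this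
    intro B hB hBm
    exact aux_measure_le a b hab (F n) (G n) μf μg hGmono hFrc hGrc hμf hμg hmono' B hB hBm
  · intro hle
    refine ⟨fun k => F k - G k, by show F 0 - G 0 = f - g; rw [hF0, hG0], ?_, ?_⟩
    · intro k hk x hx
      exact (hFchain k hk x hx).sub (hGchain k hk x hx)
    · intro x hx y hy hxy
      have hsub : Set.Ioc x y ⊆ Set.Ioo a b :=
        fun t ht => ⟨hx.1.trans ht.1, lt_of_le_of_lt ht.2 hy.2⟩
      have h1 := hle _ hsub measurableSet_Ioc
      rw [hμf x hx y hy hxy, hμg x hx y hy hxy] at h1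
      have h2 : (0:ℝ) ≤ F n y - F n x := sub_nonneg.2 (hFmono hx hy hxy)
      have h3 := (ENNReal.ofReal_le_ofReal_iff h2).1 h1
      show F n x - G n x ≤ F n y - G n y
      linarith
end

section
/- Let μ and ν be σ-finite Borel measures on ℝ with Lebesgue decompositions μ = μ_cont + μ_sing + μ_pp and ν = ν_cont + ν_sing + ν_pp into absolutely continuous (w.r.t. Lebesgue measure), singular continuous, and pure point (discrete) parts. Then μ ≥ ν if and only if μ_cont ≥ ν_cont, μ_sing ≥ ν_sing and μ_pp ≥ ν_pp. -/
open MeasureTheory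

/-- Let `μ`, `ν` be σ-finite Borel measures on `ℝ` with Lebesgue decompositions into
absolutely continuous (w.r.t. Lebesgue measure), singular continuous, and pure point
parts. Then `ν ≤ μ` iff each part of `ν` is dominated by the corresponding part of
`μ`. -/
theorem le_iff_parts_le (μ ν μc μs μp νc νs νp : Measure ℝ)
    [SigmaFinite μ] [SigmaFinite ν]
    (hμ : μ = μc + μs + μp) (hν : ν = νc + νs + νp)
    (hμc : μc ≪ volume) (hνc : νc ≪ volume)
    (hμs : μs ⟂ₘ volume) (hνs : νs ⟂ₘ volume)
    (hμs_cont : ∀ x : ℝ, μs {x} = 0) (hνs_cont : ∀ x : ℝ, νs {x} = 0)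
    (hμp : ∃ s : Set ℝ, s.Countable ∧ μp sᶜ = 0)
    (hνp : ∃ s : Set ℝ, s.Countable ∧ νp sᶜ = 0) :
    ν ≤ μ ↔ νc ≤ μc ∧ νs ≤ μs ∧ νp ≤ μp := by
  subst hμ hν
  constructor
  · intro h
    have key : ∀ A : Set ℝ, νc A + νs A + νp A ≤ μc A + μs A + μp A := by
      intro A
      have := Measure.le_iff'.1 h A
      simpa using this
    obtain ⟨u, hum, hu0, hu0c⟩ := hμs
    obtain ⟨v, hvm, hv0, hv0c⟩ := hνs
    obtain ⟨s₁, hs₁c, hs₁0⟩ := hμp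
    obtain ⟨s₂, hs₂c, hs₂0⟩ := hνp
    haveI : NoAtoms μs := ⟨hμs_cont⟩
    haveI : NoAtoms νs := ⟨hνs_cont⟩
    set T := u ∩ v with hT
    set s := s₁ ∪ s₂ with hs
    have hsc : s.Countable := hs₁c.union hs₂c
    have hTc : volume Tᶜ = 0 := by
      rw [hT, Set.compl_inter]
      exact measure_union_null hu0c hv0c
    have hμsT : μs T = 0 := measure_mono_null Set.inter_subset_left hu0
    have hνsT : νs T = 0 := measure_mono_null Set.inter_subset_right hv0
    have hμps : μp sᶜ = 0 :=
      measure_mono_null (Set.compl_subset_compl.2 Set.subset_union_left) hs₁0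
    have hνps : νp sᶜ = 0 :=
      measure_mono_null (Set.compl_subset_compl.2 Set.subset_union_right) hs₂0
    have hvols : volume s = 0 := hsc.measure_zero _
    have hμcs : μc s = 0 := hμc hvols
    have hνcs : νc s = 0 := hνc hvols
    have hμss : μs s = 0 := by haveI : NullSingletonClass μs := ⟨hμs_cont⟩; exact hsc.measure_zero _
    have hνss : νs s = 0 := by haveI : NullSingletonClass νs := ⟨hνs_cont⟩; exact hsc.measure_zero _
    have hμcT : μc Tᶜ = 0 := hμc hTc
    have hνcT : νc Tᶜ = 0 := hνc hTc
    refine ⟨?_, ?_, ?_⟩ <;> rw [Measure.le_iff'] <;> intro B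
    · -- absolutely continuous parts, use A = T ∩ sᶜ
      set A : Set ℝ := T ∩ sᶜ with hA
      have hAc : νc (B ∩ Aᶜ) = 0 := by
        have : Aᶜ = Tᶜ ∪ s := by rw [hA, Set.compl_inter, compl_compl]
        refine measure_mono_null (Set.inter_subset_right.trans this.subset) ?_
        exact measure_union_null hνcT hνcs
      calc νc B = νc (B ∩ A ∪ B ∩ Aᶜ) := by rw [Set.inter_union_compl]
        _ ≤ νc (B ∩ A) + νc (B ∩ Aᶜ) := measure_union_le _ _
        _ = νc (B ∩ A) := by rw [hAc, add_zero]
        _ ≤ νc (B ∩ A) + νs (B ∩ A) + νp (B ∩ A) := by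
              exact le_add_right (le_add_right le_rfl)
        _ ≤ μc (B ∩ A) + μs (B ∩ A) + μp (B ∩ A) := key _
        _ = μc (B ∩ A) := by
              have h1 : μs (B ∩ A) = 0 :=
                measure_mono_null (by rw [hA]; exact (Set.inter_subset_right).trans Set.inter_subset_left) hμsT
              have h2 : μp (B ∩ A) = 0 :=
                measure_mono_null (by rw [hA]; exact (Set.inter_subset_right).trans Set.inter_subset_right) hμps
              rw [h1, h2, add_zero, add_zero]
        _ ≤ μc B := measure_mono Set.inter_subset_left
    · -- singular continuous parts, use A = Tᶜ ∩ sᶜ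
      set A : Set ℝ := Tᶜ ∩ sᶜ with hA
      have hAc : νs (B ∩ Aᶜ) = 0 := by
        have : Aᶜ = T ∪ s := by rw [hA, Set.compl_inter, compl_compl, compl_compl]
        refine measure_mono_null (Set.inter_subset_right.trans this.subset) ?_
        exact measure_union_null hνsT hνss
      calc νs B = νs (B ∩ A ∪ B ∩ Aᶜ) := by rw [Set.inter_union_compl]
        _ ≤ νs (B ∩ A) + νs (B ∩ Aᶜ) := measure_union_le _ _
        _ = νs (B ∩ A) := by rw [hAc, add_zero]
        _ ≤ νc (B ∩ A) + νs (B ∩ A) + νp (B ∩ A) := by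
              exact le_add_right (le_add_left le_rfl)
        _ ≤ μc (B ∩ A) + μs (B ∩ A) + μp (B ∩ A) := key _
        _ = μs (B ∩ A) := by
              have h1 : μc (B ∩ A) = 0 :=
                measure_mono_null (by rw [hA]; exact (Set.inter_subset_right).trans Set.inter_subset_left) hμcT
              have h2 : μp (B ∩ A) = 0 :=
                measure_mono_null (by rw [hA]; exact (Set.inter_subset_right).trans Set.inter_subset_right) hμps
              rw [h1, h2, add_zero, zero_add]
        _ ≤ μs B := measure_mono Set.inter_subset_left
    · -- pure point parts, use A = s
      have hAc : νp (B ∩ sᶜ) = 0 := measure_mono_null Set.inter_subset_right hνps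
      calc νp B = νp (B ∩ s ∪ B ∩ sᶜ) := by rw [Set.inter_union_compl]
        _ ≤ νp (B ∩ s) + νp (B ∩ sᶜ) := measure_union_le _ _
        _ = νp (B ∩ s) := by rw [hAc, add_zero]
        _ ≤ νc (B ∩ s) + νs (B ∩ s) + νp (B ∩ s) := le_add_self
        _ ≤ μc (B ∩ s) + μs (B ∩ s) + μp (B ∩ s) := key _
        _ = μp (B ∩ s) := by
              have h1 : μc (B ∩ s) = 0 :=
                measure_mono_null Set.inter_subset_right hμcs
              have h2 : μs (B ∩ s) = 0 :=
                measure_mono_null Set.inter_subset_right hμss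
              rw [h1, h2, zero_add, zero_add]
        _ ≤ μp B := measure_mono Set.inter_subset_left
  · rintro ⟨h1, h2, h3⟩
    exact add_le_add (add_le_add h1 h2) h3
end

section
/- Let c > 0, n ∈ ℕ, and let f : (a,b) → ℝ be n-convex. Then f is strongly n-convex with modulus c (i.e. the function f(x) − c x^{n+1}/(n+1)! is n-convex) if and only if the pointwise derivative f^{(n+1)}(x), which exists Lebesgue-almost everywhere, satisfies f^{(n+1)}(x) ≥ c for Lebesgue-almost every x ∈ (a,b). -/
open Set Filter MeasureTheory Topology

/-- Derivative of the monomial `c x^(n+1-k)/(n+1-k)!`. -/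
lemma hasDerivAt_monomial (n k : ℕ) (hk : k ≤ n) (c x : ℝ) :
    HasDerivAt (fun t : ℝ => c * t ^ (n + 1 - k) / (Nat.factorial (n + 1 - k) : ℝ))
      (c * x ^ (n + 1 - (k + 1)) / (Nat.factorial (n + 1 - (k + 1)) : ℝ)) x := by
  set m := n - k with hm
  have hm1 : n + 1 - k = m + 1 := by omega
  have hm2 : n + 1 - (k + 1) = m := by omega
  rw [hm1, hm2]
  have h := ((hasDerivAt_pow (m + 1) x).const_mul c).div_const
    (Nat.factorial (m + 1) : ℝ)
  refine h.congr_deriv ?_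
  have hfac : (Nat.factorial m : ℝ) ≠ 0 := Nat.cast_ne_zero.2 (Nat.factorial_ne_zero m)
  have hfac1 : (Nat.factorial (m + 1) : ℝ) = (m + 1) * Nat.factorial m := by
    rw [Nat.factorial_succ]; push_cast; ring
  rw [hfac1]
  have hm1' : (m : ℝ) + 1 ≠ 0 := by positivity
  simp only [Nat.add_sub_cancel]
  field_simp
  push_cast
  ring

/-- Key quantitative lemma: a globally monotone function whose a.e. derivative is at
least `c` on `(u,v)` grows at least at rate `c` on `(u,v)`. -/
lemma monotone_growth (c : ℝ) (hc : 0 < c) (φ : ℝ → ℝ) (hφ : Monotone φ) (u v : ℝ)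
    (h : ∀ᵐ x ∂volume, x ∈ Set.Ioo u v → ∃ d, c ≤ d ∧ HasDerivAt φ d x) :
    ∀ x ∈ Set.Ioo u v, ∀ y ∈ Set.Ioo u v, x < y → c * (y - x) ≤ φ y - φ x := by
  intro x hx y hy hxy
  set μ := hφ.stieltjesFunction.measure with hμ
  have hae : ∀ᵐ t ∂volume, t ∈ Set.Ioo u v →
      ENNReal.ofReal c ≤ μ.rnDeriv volume t := by
    filter_upwards [h, hφ.ae_hasDerivAt] with t ht h't htm
    obtain ⟨d, hcd, hd⟩ := ht htm
    have heq : (μ.rnDeriv volume t).toReal = d := h't.unique hd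
    by_cases htop : μ.rnDeriv volume t = ⊤
    · simp [htop]
    · rw [ENNReal.ofReal_le_iff_le_toReal htop, heq]; exact hcd
  -- main bound at interior points t ∈ (x, y)
  have key : ∀ t ∈ Set.Ioo x y, c * (t - x) ≤ φ y - φ x := by
    intro t ht
    have hxt : x < t := ht.1
    have hsub : Set.Ioc x t ⊆ Set.Ioo u v := fun s hs =>
      ⟨hx.1.trans hs.1, lt_of_le_of_lt hs.2 (ht.2.trans hy.2)⟩
    have h1 : ENNReal.ofReal c * volume (Set.Ioc x t)
        ≤ ∫⁻ s in Set.Ioc x t, μ.rnDeriv volume s := by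
      rw [← MeasureTheory.setLIntegral_const]
      refine MeasureTheory.setLIntegral_mono_ae
        (μ.measurable_rnDeriv volume).aemeasurable ?_
      filter_upwards [hae] with s hs hsmem
      exact hs (hsub hsmem)
    have h2 : ∫⁻ s in Set.Ioc x t, μ.rnDeriv volume s ≤ μ (Set.Ioc x t) :=
      Measure.setLIntegral_rnDeriv_le _
    have h3 : μ (Set.Ioc x t)
        = ENNReal.ofReal (hφ.stieltjesFunction t - hφ.stieltjesFunction x) :=
      StieltjesFunction.measure_Ioc _ _ _
    have hvol : volume (Set.Ioc x t) = ENNReal.ofReal (t - x) := Real.volume_Ioc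
    have h4 : ENNReal.ofReal (c * (t - x))
        ≤ ENNReal.ofReal (hφ.stieltjesFunction t - hφ.stieltjesFunction x) := by
      rw [ENNReal.ofReal_mul hc.le]
      calc ENNReal.ofReal c * ENNReal.ofReal (t - x)
          = ENNReal.ofReal c * volume (Set.Ioc x t) := by rw [hvol]
        _ ≤ μ (Set.Ioc x t) := h1.trans h2
        _ = _ := h3
    have hg : 0 ≤ hφ.stieltjesFunction t - hφ.stieltjesFunction x :=
      sub_nonneg.2 (hφ.stieltjesFunction.mono hxt.le)
    have h5 : c * (t - x) ≤ hφ.stieltjesFunction t - hφ.stieltjesFunction x :=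
      (ENNReal.ofReal_le_ofReal_iff hg).1 h4
    have hgt : hφ.stieltjesFunction t ≤ φ y := by
      rw [hφ.stieltjesFunction_eq]; exact hφ.rightLim_le ht.2
    have hgx : φ x ≤ hφ.stieltjesFunction x := by
      rw [hφ.stieltjesFunction_eq]; exact hφ.le_rightLim le_rfl
    linarith
  -- pass to the limit t → y⁻
  have hlim : Tendsto (fun t : ℝ => c * (t - x)) (𝓝[<] y) (𝓝 (c * (y - x))) :=
    ((continuous_const.mul (continuous_id.sub continuous_const)).tendsto y).mono_left
      nhdsWithin_le_nhds
  refine le_of_tendsto hlim ?_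
  filter_upwards [Ioo_mem_nhdsLT_of_mem (⟨hxy, le_rfl⟩ : y ∈ Set.Ioc x y)] with t ht
  exact key t ht

/-- Let `f` be `n`-convex on `(a,b)`, with right-derivative chain `F` (so `F n` is the
non-decreasing right `n`-th derivative of `f`). Then `f` is strongly `n`-convex with
modulus `c > 0` (i.e. `x ↦ f(x) - c x^{n+1}/(n+1)!` is `n`-convex) iff the pointwise
derivative `f⁽ⁿ⁺¹⁾` exists a.e. on `(a,b)` and satisfies `f⁽ⁿ⁺¹⁾(x) ≥ c` a.e. -/
theorem strongly_nconvex_iff_ae_deriv (n : ℕ) (a b c : ℝ) (hab : a < b)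
    (hc : 0 < c) (f : ℝ → ℝ) (F : ℕ → ℝ → ℝ) (hF0 : F 0 = f)
    (hchain : IsRightDerivChainOn F n a b)
    (hmono : MonotoneOn (F n) (Set.Ioo a b)) :
    NConvexOn n a b (fun x => f x - c * x ^ (n + 1) / (Nat.factorial (n + 1))) ↔
      ∀ᵐ x ∂MeasureTheory.volume, x ∈ Set.Ioo a b →
        ∃ d : ℝ, c ≤ d ∧ HasDerivAt (F n) d x := by
  constructor
  · rintro ⟨G, hG0, hGchain, hGmono⟩
    -- identify G with F minus the monomial chain
    have claim : ∀ k, k ≤ n → ∀ x ∈ Set.Ioo a b,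
        G k x = F k x - c * x ^ (n + 1 - k) / (Nat.factorial (n + 1 - k) : ℝ) := by
      intro k
      induction k with
      | zero =>
        intro _ x _
        rw [hG0]
        simp [hF0]
      | succ k ih =>
        intro hk x hx
        have hk' : k ≤ n := by omega
        have h1 : HasDerivWithinAt (G k) (G (k + 1) x) (Set.Ici x) x :=
          hGchain k (by omega) x hx
        have h2 : HasDerivWithinAt
            (fun t => F k t - c * t ^ (n + 1 - k) / (Nat.factorial (n + 1 - k) : ℝ))
            (F (k + 1) x - c * x ^ (n + 1 - (k + 1)) /
              (Nat.factorial (n + 1 - (k + 1)) : ℝ)) (Set.Ici x) x :=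
          (hchain k (by omega) x hx).sub
            (hasDerivAt_monomial n k hk' c x).hasDerivWithinAt
        have heq : (fun t => F k t - c * t ^ (n + 1 - k) /
            (Nat.factorial (n + 1 - k) : ℝ)) =ᶠ[𝓝[Set.Ici x] x] G k := by
          refine Filter.EventuallyEq.filter_mono ?_ nhdsWithin_le_nhds
          filter_upwards [isOpen_Ioo.mem_nhds hx] with t ht
          exact (ih hk' t ht).symm
        have h1' : HasDerivWithinAt
            (fun t => F k t - c * t ^ (n + 1 - k) / (Nat.factorial (n + 1 - k) : ℝ))
            (G (k + 1) x) (Set.Ici x) x :=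
          h1.congr_of_eventuallyEq heq (ih hk' x hx).symm
        have := (uniqueDiffOn_Ici x x Set.self_mem_Ici).eq_deriv _ h2 h1'
        linarith [this]
    -- hence F n - c·x is monotone on (a,b)
    have hmono' : MonotoneOn (fun x => F n x - c * x) (Set.Ioo a b) := by
      intro x hx y hy hxy
      have h := hGmono hx hy hxy
      rw [claim n le_rfl x hx, claim n le_rfl y hy,
        show n + 1 - n = 1 from by omega] at h
      simpa using h
    -- a.e. differentiability of the monotone function F n - c·x
    have hdiff := hmono'.ae_differentiableWithinAt_of_mem
    filter_upwards [hdiff] with x hx hmem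
    have hdx : DifferentiableAt ℝ (fun t => F n t - c * t) x :=
      (hx hmem).differentiableAt (isOpen_Ioo.mem_nhds hmem)
    set d := deriv (fun t => F n t - c * t) x with hd
    have hderiv : HasDerivAt (fun t => F n t - c * t) d x := hdx.hasDerivAt
    -- the derivative of a function monotone near x is nonnegative
    have hd0 : 0 ≤ d := by
      have hslope : Tendsto (slope (fun t => F n t - c * t) x) (𝓝[>] x) (𝓝 d) :=
        (hasDerivAt_iff_tendsto_slope.1 hderiv).mono_left
          (nhdsWithin_mono x fun t ht => ne_of_gt ht)
      refine ge_of_tendsto hslope ?_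
      filter_upwards [Ioo_mem_nhdsGT_of_mem (⟨le_rfl, hmem.2⟩ : x ∈ Set.Ico x b)]
        with t ht
      have htm : t ∈ Set.Ioo a b := ⟨hmem.1.trans ht.1, ht.2⟩
      have h : F n x - c * x ≤ F n t - c * t := hmono' hmem htm ht.1.le
      rw [slope_def_field]
      have hpos : 0 < t - x := sub_pos.2 ht.1
      have : (0 : ℝ) ≤ (F n t - c * t) - (F n x - c * x) := by linarith
      positivity
    have hcx : HasDerivAt (fun t : ℝ => c * t) c x := by
      simpa using (hasDerivAt_id x).const_mul c
    have hsum := hderiv.add hcx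
    have hFn : HasDerivAt (F n) (d + c) x :=
      hsum.congr_of_eventuallyEq (Eventually.of_forall fun t => by simp only [Pi.add_apply]; ring)
    exact ⟨d + c, by linarith, hFn⟩
  · -- reverse direction
    intro hae
    refine ⟨fun k => fun x => F k x - c * x ^ (n + 1 - k) /
      (Nat.factorial (n + 1 - k) : ℝ), ?_, ?_, ?_⟩
    · funext x; simp [hF0]
    · intro k hk x hx
      exact (hchain k hk x hx).sub
        (hasDerivAt_monomial n k hk.le c x).hasDerivWithinAt
    · -- monotonicity of F n - c·x on (a,b)
      have hmono' : MonotoneOn (fun x => F n x - c * x) (Set.Ioo a b) := by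
        intro x hx y hy hxy
        rcases eq_or_lt_of_le hxy with rfl | hlt
        · exact le_refl _
        obtain ⟨u, hau, hux⟩ := exists_between hx.1
        obtain ⟨v, hyv, hvb⟩ := exists_between hy.2
        have huv : u < v := hux.trans (hlt.trans hyv)
        set φ : ℝ → ℝ := fun t => F n (max u (min t v)) with hφdef
        have hclamp : ∀ t, max u (min t v) ∈ Set.Ioo a b := fun t =>
          ⟨hau.trans_le (le_max_left _ _),
            lt_of_le_of_lt (max_le huv.le (min_le_right _ _)) hvb⟩
        have hφmono : Monotone φ := fun s t hst =>
          hmono (hclamp s) (hclamp t)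
            (max_le_max le_rfl (min_le_min hst le_rfl))
        have hφae : ∀ᵐ t ∂volume, t ∈ Set.Ioo u v → ∃ d, c ≤ d ∧ HasDerivAt φ d t := by
          filter_upwards [hae] with t ht htm
          have htab : t ∈ Set.Ioo a b := ⟨hau.trans htm.1, htm.2.trans hvb⟩
          obtain ⟨d, hcd, hd⟩ := ht htab
          refine ⟨d, hcd, hd.congr_of_eventuallyEq ?_⟩
          filter_upwards [isOpen_Ioo.mem_nhds htm] with s hs
          simp [hφdef, min_eq_left hs.2.le, max_eq_right hs.1.le]
        have hxuv : x ∈ Set.Ioo u v := ⟨hux, hlt.trans hyv⟩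
        have hyuv : y ∈ Set.Ioo u v := ⟨hux.trans hlt, hyv⟩
        have hgrow := monotone_growth c hc φ hφmono u v hφae x hxuv y hyuv hlt
        have hφx : φ x = F n x := by
          simp [hφdef, min_eq_left hxuv.2.le, max_eq_right hxuv.1.le]
        have hφy : φ y = F n y := by
          simp [hφdef, min_eq_left hyuv.2.le, max_eq_right hyuv.1.le]
        rw [hφx, hφy] at hgrow
        have : c * (y - x) ≥ c * 0 := by
          have : (0:ℝ) ≤ y - x := by linarith
          nlinarith
        simp only []
        linarith
      intro x hx y hy hxy
      have h := hmono' hx hy hxy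
      simp only [show n + 1 - n = 1 from by omega, pow_one, Nat.factorial_one,
        Nat.cast_one, div_one]
      exact h
end

section
/- Let n ∈ ℕ, c > 0, and let f : (a,b) → ℝ be (n+1)-times differentiable. Then f is strongly n-convex with modulus c if and only if f^{(n+1)}(x) ≥ c for all x ∈ (a,b). -/
open Set Filter MeasureTheory Topology

lemma aux_deriv_pow (c : ℝ) (m : ℕ) (x : ℝ) :
    HasDerivAt (fun y => c * y ^ (m + 1) / (Nat.factorial (m + 1)))
      (c * x ^ m / (Nat.factorial m)) x := by
  have h := ((hasDerivAt_pow (m + 1) x).const_mul c).div_const (Nat.factorial (m + 1))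
  refine h.congr_deriv ?_
  have h1 : (Nat.factorial (m + 1) : ℝ) = (m + 1) * Nat.factorial m := by
    push_cast [Nat.factorial_succ]; ring
  have h2 : (Nat.factorial m : ℝ) ≠ 0 := Nat.cast_ne_zero.2 (Nat.factorial_ne_zero m)
  rw [h1]
  simp only [Nat.add_sub_cancel, Nat.cast_add, Nat.cast_one]
  field_simp

lemma deriv_nonneg_of_monotoneOn {g : ℝ → ℝ} {a b x d : ℝ} (hx : x ∈ Set.Ioo a b)
    (hm : MonotoneOn g (Set.Ioo a b)) (hd : HasDerivAt g d x) : 0 ≤ d := by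
  have h := hasDerivAt_iff_tendsto_slope.1 hd
  have h' : Filter.Tendsto (slope g x) (𝓝[>] x) (𝓝 d) :=
    h.mono_left (nhdsWithin_mono x fun y hy => ne_of_gt hy)
  have hev : ∀ᶠ y in 𝓝[>] x, 0 ≤ slope g x y := by
    filter_upwards [Ioo_mem_nhdsGT_of_mem (⟨le_refl x, hx.2⟩ : x ∈ Set.Ico x b)] with y hy
    have hy1 : y ∈ Set.Ioo a b := ⟨hx.1.trans hy.1, hy.2⟩
    rw [slope_def_field]
    exact div_nonneg (sub_nonneg.2 (hm hx hy1 hy.1.le)) (sub_nonneg.2 hy.1.le)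
  exact ge_of_tendsto h' hev

/-- Let `f` be `(n+1)`-times differentiable on `(a,b)` (with derivative chain `F`, so
`F (n+1)` is `f⁽ⁿ⁺¹⁾`). Then `f` is strongly `n`-convex with modulus `c > 0` (i.e.
`x ↦ f(x) - c x^{n+1}/(n+1)!` is `n`-convex) iff `f⁽ⁿ⁺¹⁾(x) ≥ c` for all
`x ∈ (a,b)`. -/
theorem strongly_nconvex_iff_deriv (n : ℕ) (a b c : ℝ) (hab : a < b)
    (hc : 0 < c) (f : ℝ → ℝ) (F : ℕ → ℝ → ℝ) (hF0 : F 0 = f)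
    (hchain : ∀ k < n + 1, ∀ x ∈ Set.Ioo a b, HasDerivAt (F k) (F (k + 1) x) x) :
    NConvexOn n a b (fun x => f x - c * x ^ (n + 1) / (Nat.factorial (n + 1))) ↔
      ∀ x ∈ Set.Ioo a b, c ≤ F (n + 1) x := by
  set G : ℕ → ℝ → ℝ :=
    fun k x => F k x - c * x ^ (n + 1 - k) / (Nat.factorial (n + 1 - k)) with hGdef
  have hG0 : G 0 = fun x => f x - c * x ^ (n + 1) / (Nat.factorial (n + 1)) := by
    funext x; simp [hGdef, hF0]
  have hGd : ∀ k ≤ n, ∀ x ∈ Set.Ioo a b, HasDerivAt (G k) (G (k + 1) x) x := by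
    intro k hk x hx
    have h1 := hchain k (by omega) x hx
    have hm : n + 1 - k = (n - k) + 1 := by omega
    have hm2 : n + 1 - (k + 1) = n - k := by omega
    have h2 := aux_deriv_pow c (n - k) x
    have : HasDerivAt (fun y => F k y - c * y ^ ((n - k) + 1) / (Nat.factorial ((n - k) + 1)))
        (F (k + 1) x - c * x ^ (n - k) / (Nat.factorial (n - k))) x := h1.sub h2
    simpa [hGdef, hm, hm2] using this
  have hGn1 : ∀ x : ℝ, G (n + 1) x = F (n + 1) x - c := by
    intro x; simp [hGdef]
  constructor
  · rintro ⟨F', hF'0, hch', hmono⟩ x hx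
    have key : ∀ k ≤ n, Set.EqOn (F' k) (G k) (Set.Ioo a b) := by
      intro k hk
      induction k with
      | zero => intro y _; rw [hF'0, hG0]
      | succ k ih =>
        intro y hy
        have ihk := ih (by omega)
        have hd1 : HasDerivWithinAt (F' k) (F' (k + 1) y) (Set.Ici y) y :=
          hch' k (by omega) y hy
        have hd2 : HasDerivWithinAt (G k) (G (k + 1) y) (Set.Ici y) y :=
          (hGd k (by omega) y hy).hasDerivWithinAt
        have heq : G k =ᶠ[𝓝 y] F' k :=
          Filter.eventuallyEq_of_mem (Ioo_mem_nhds hy.1 hy.2) fun z hz => (ihk hz).symm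
        have hd1' : HasDerivWithinAt (G k) (F' (k + 1) y) (Set.Ici y) y :=
          hd1.congr_of_eventuallyEq (heq.filter_mono nhdsWithin_le_nhds) (ihk hy).symm
        have e1 := hd1'.derivWithin (uniqueDiffOn_Ici y y Set.self_mem_Ici)
        have e2 := hd2.derivWithin (uniqueDiffOn_Ici y y Set.self_mem_Ici)
        rw [← e1, ← e2]
    have hmono' : MonotoneOn (G n) (Set.Ioo a b) := by
      intro u hu v hv huv
      rw [← key n le_rfl hu, ← key n le_rfl hv]
      exact hmono hu hv huv
    have hd := hGd n le_rfl x hx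
    have h0 := deriv_nonneg_of_monotoneOn hx hmono' hd
    rw [hGn1] at h0
    linarith
  · intro hge
    refine ⟨G, hG0, fun k hk x hx => (hGd k (by omega) x hx).hasDerivWithinAt, ?_⟩
    have hint : interior (Set.Ioo a b) = Set.Ioo a b := interior_Ioo
    apply monotoneOn_of_hasDerivWithinAt_nonneg (f' := G (n + 1)) (convex_Ioo a b)
    · intro x hx
      exact ((hGd n le_rfl x hx).differentiableAt).continuousAt.continuousWithinAt
    · intro x hx
      rw [hint] at hx ⊢
      exact (hGd n le_rfl x hx).hasDerivWithinAt
    · intro x hx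
      rw [hint] at hx
      rw [hGn1]
      linarith [hge x hx]
end
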